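/- arXiv:2001.08705 — 5 statements merged into one kernel-verified Lean document; each statement's English description precedes it below -/
import Mathlib

section
/- Let k be a positive integer, p = 1/k, and X a finite set of size l. Then there exists a function g from the set of partitions of X to [0,1] such that for every nonempty subset A of X, the sum of g(T) over all partitions T of X containing A as a block equals p^{|A|} (1-p)^{l-|A|}. -/
open Finset

/-- `T` is a partition of the finite type `α` (viewed as the set `X`): a collection of
pairwise disjoint nonempty subsets whose union is all of `X`. -/
def IsPartitionOf {α : Type*} [Fintype α] [DecidableEq α] (T : Finset (Finset α)) : Prop :=
  (∀ B ∈ T, B.Nonempty) ∧ (∀ B ∈ T, ∀ C ∈ T, B ≠ C → Disjoint B C) ∧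
    T.biUnion id = Finset.univ

instance {α : Type*} [Fintype α] [DecidableEq α] :
    DecidablePred (IsPartitionOf (α := α)) := fun T => by
  unfold IsPartitionOf; infer_instance

/-- The partition of `α` into the fibers of a coloring `f`. -/
def fiberPart {α : Type*} [Fintype α] [DecidableEq α] {k : ℕ} (f : α → Fin k) :
    Finset (Finset α) :=
  Finset.univ.image (fun x => Finset.univ.filter (fun y => f y = f x))

lemma fiberPart_isPartition {α : Type*} [Fintype α] [DecidableEq α] {k : ℕ} (f : α → Fin k) :
    IsPartitionOf (fiberPart f) := by
  refine ⟨?_, ?_, ?_⟩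
  · intro B hB
    simp only [fiberPart, mem_image] at hB
    obtain ⟨x, -, rfl⟩ := hB
    exact ⟨x, by simp⟩
  · intro B hB C hC hne
    simp only [fiberPart, mem_image] at hB hC
    obtain ⟨x, -, rfl⟩ := hB
    obtain ⟨y, -, rfl⟩ := hC
    rw [Finset.disjoint_left]
    intro z hz hz'
    simp only [mem_filter, mem_univ, true_and] at hz hz'
    apply hne
    ext w
    simp only [mem_filter, mem_univ, true_and, ← hz, ← hz']
  · ext x
    simp only [mem_biUnion, id, mem_univ, iff_true]
    exact ⟨_, mem_image_of_mem _ (mem_univ x), by simp⟩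

lemma mem_fiberPart_iff {α : Type*} [Fintype α] [DecidableEq α] {k : ℕ} {f : α → Fin k}
    {A : Finset α} {x₀ : α} (hx₀ : x₀ ∈ A) :
    A ∈ fiberPart f ↔ ∀ y, f y = f x₀ ↔ y ∈ A := by
  constructor
  · intro hA
    simp only [fiberPart, mem_image] at hA
    obtain ⟨x, -, rfl⟩ := hA
    simp only [mem_filter, mem_univ, true_and] at hx₀ ⊢
    intro y
    rw [hx₀]
  · intro h
    simp only [fiberPart, mem_image]
    refine ⟨x₀, mem_univ _, ?_⟩
    ext y
    simp only [mem_filter, mem_univ, true_and]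
    exact h y

/-- Counting colorings whose `c`-fiber is exactly `A`. -/
lemma card_colorings_fiber {α : Type*} [Fintype α] [DecidableEq α] {k : ℕ}
    (A : Finset α) (c : Fin k) :
    (Finset.univ.filter (fun f : α → Fin k => ∀ y, f y = c ↔ y ∈ A)).card
      = (k - 1) ^ (Fintype.card α - A.card) := by
  classical
  rw [← Fintype.card_subtype]
  rw [Fintype.card_congr (Equiv.subtypePiEquivPi (p := fun y (d : Fin k) => d = c ↔ y ∈ A))]
  rw [Fintype.card_pi]
  have h1 : ∀ y : α, Fintype.card {d : Fin k // d = c ↔ y ∈ A}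
      = if y ∈ A then 1 else k - 1 := by
    intro y
    by_cases hy : y ∈ A
    · rw [if_pos hy]
      rw [Fintype.card_congr (Equiv.subtypeEquivRight (q := fun d => d = c)
        (fun d => by simp [hy]))]
      exact Fintype.card_subtype_eq c
    · rw [if_neg hy]
      rw [Fintype.card_congr (Equiv.subtypeEquivRight (q := fun d => ¬ d = c)
        (fun d => by simp [hy]))]
      rw [Fintype.card_subtype_compl, Fintype.card_subtype_eq c, Fintype.card_fin]
  rw [Finset.prod_congr rfl (fun y _ => h1 y)]
  rw [Finset.prod_ite, Finset.prod_const, Finset.prod_const, one_pow, one_mul]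
  congr 1
  have : Finset.univ.filter (fun y => ¬ y ∈ A) = Aᶜ := by ext y; simp
  rw [this, Finset.card_compl]

lemma card_colorings_block {α : Type*} [Fintype α] [DecidableEq α] {k : ℕ}
    {A : Finset α} (hA : A.Nonempty) :
    (Finset.univ.filter (fun f : α → Fin k => A ∈ fiberPart f)).card
      = k * (k - 1) ^ (Fintype.card α - A.card) := by
  classical
  obtain ⟨x₀, hx₀⟩ := hA
  rw [Finset.card_eq_sum_card_fiberwise (f := fun f : α → Fin k => f x₀)
    (t := Finset.univ) (fun f _ => mem_univ _)]
  have key : ∀ c : Fin k,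
      ((Finset.univ.filter (fun f : α → Fin k => A ∈ fiberPart f)).filter
        (fun f => f x₀ = c))
      = Finset.univ.filter (fun f : α → Fin k => ∀ y, f y = c ↔ y ∈ A) := by
    intro c
    ext f
    simp only [Finset.mem_filter, Finset.mem_univ, true_and,
      mem_fiberPart_iff hx₀]
    constructor
    · rintro ⟨h, rfl⟩
      exact h
    · intro h
      have hc : f x₀ = c := (h x₀).mpr hx₀
      exact ⟨by rw [hc]; exact h, hc⟩
  calc ∑ c : Fin k, ((Finset.univ.filter (fun f : α → Fin k => A ∈ fiberPart f)).filter
        (fun f => f x₀ = c)).card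
      = ∑ c : Fin k, (k - 1) ^ (Fintype.card α - A.card) := by
        refine Finset.sum_congr rfl fun c _ => ?_
        rw [key c, card_colorings_fiber]
    _ = k * (k - 1) ^ (Fintype.card α - A.card) := by
        rw [Finset.sum_const, Finset.card_univ, Fintype.card_fin, smul_eq_mul]

theorem stmt_0 {α : Type*} [Fintype α] [DecidableEq α] (l : ℕ) (hl : Fintype.card α = l)
    (k : ℕ) (hk : 0 < k) (p : ℝ) (hp : p = 1 / k) :
    ∃ g : Finset (Finset α) → ℝ,
      (∀ T, 0 ≤ g T ∧ g T ≤ 1) ∧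
      ∀ A : Finset α, A.Nonempty →
        ∑ T ∈ Finset.univ.filter (fun T : Finset (Finset α) => IsPartitionOf T ∧ A ∈ T), g T
          = p ^ A.card * (1 - p) ^ (l - A.card) := by
  classical
  subst hl
  have hk0 : (0 : ℝ) < (k : ℝ) := by exact_mod_cast hk
  have hkpow : ∀ n : ℕ, (0 : ℝ) < (k : ℝ) ^ n := fun n => pow_pos hk0 n
  set l := Fintype.card α with hl
  refine ⟨fun T => ((Finset.univ.filter (fun f : α → Fin k => fiberPart f = T)).card : ℝ)
    / (k : ℝ) ^ (l + 1), ?_, ?_⟩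
  · intro T
    constructor
    · positivity
    · rw [div_le_one (hkpow _)]
      have h1 : (Finset.univ.filter (fun f : α → Fin k => fiberPart f = T)).card
          ≤ k ^ l := by
        calc (Finset.univ.filter (fun f : α → Fin k => fiberPart f = T)).card
            ≤ (Finset.univ : Finset (α → Fin k)).card := Finset.card_filter_le _ _
          _ = k ^ l := by rw [Finset.card_univ, Fintype.card_fun, Fintype.card_fin]
      have h2 : (k : ℝ) ^ l ≤ (k : ℝ) ^ (l + 1) := by
        apply pow_le_pow_right₀ _ (Nat.le_succ l)
        exact_mod_cast hk
      calc ((Finset.univ.filter (fun f : α → Fin k => fiberPart f = T)).card : ℝ)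
          ≤ ((k : ℝ)) ^ l := by exact_mod_cast h1
        _ ≤ (k : ℝ) ^ (l + 1) := h2
  · intro A hA
    have ha : A.card ≤ l := by
      rw [hl, ← Finset.card_univ]; exact A.card_le_univ
    -- sum of counts equals count of colorings whose fiber partition contains A
    have hsum : ∑ T ∈ Finset.univ.filter
          (fun T : Finset (Finset α) => IsPartitionOf T ∧ A ∈ T),
        ((Finset.univ.filter (fun f : α → Fin k => fiberPart f = T)).card : ℝ)
        = ((Finset.univ.filter (fun f : α → Fin k => A ∈ fiberPart f)).card : ℝ) := by
      rw [← Nat.cast_sum]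
      congr 1
      rw [Finset.card_eq_sum_card_fiberwise (f := fun f : α → Fin k => fiberPart f)
        (t := Finset.univ.filter (fun T : Finset (Finset α) => IsPartitionOf T ∧ A ∈ T))
        (fun f hf => by
          simp only [Finset.mem_coe, Finset.mem_filter, Finset.mem_univ, true_and] at hf ⊢
          exact ⟨fiberPart_isPartition f, hf⟩)]
      refine Finset.sum_congr rfl fun T hT => ?_
      congr 1
      ext f
      simp only [Finset.mem_filter, Finset.mem_univ, true_and] at hT ⊢
      constructor
      · intro h
        exact ⟨h ▸ hT.2, h⟩
      · exact And.right
    rw [← Finset.sum_div, hsum, card_colorings_block hA]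
    -- now pure real arithmetic
    have hcast : ((k - 1 : ℕ) : ℝ) = (k : ℝ) - 1 := by
      have : (1 : ℕ) ≤ k := hk
      push_cast [this]
      ring
    rw [hp]
    have h1p : (1 : ℝ) - 1 / k = ((k : ℝ) - 1) / k := by field_simp
    rw [h1p]
    rw [div_pow, div_pow, one_pow]
    push_cast [hcast]
    rw [div_mul_div_comm]
    have hpow : (k : ℝ) ^ A.card * (k : ℝ) ^ (l - A.card) = (k : ℝ) ^ l := by
      rw [← pow_add, Nat.add_sub_cancel' ha]
    rw [one_mul, hpow]
    rw [pow_succ]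
    field_simp
    ring
end

section
/- Fix m ∈ ℕ, γ > 0, p ∈ (0,1), and let K > 4/(γ(1-p)^{2m}) be an integer. With high probability as n → ∞, the random graph G(n,p) contains no collection of sets S, T₁, ..., T_K of vertices such that the Tᵢ are pairwise disjoint, each |Tᵢ| = m, |S| ≥ γn, and for every i, all but at most ((1-p)^m/4)γn vertices of S are adjacent to at least one vertex of Tᵢ. -/
open MeasureTheory Filter

/-- The Erdős–Rényi measure on graphs with vertex set `Fin n`: each potential edge
(an element of `Sym2 (Fin n)`) is present independently with probability `p`. -/
noncomputable def gnpMeasure (n : ℕ) (p : ℝ) (hp : ENNReal.ofReal p ≤ 1) :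
    Measure (Sym2 (Fin n) → Bool) :=
  Measure.pi fun _ => (PMF.bernoulli p.toNNReal (ENNReal.coe_le_one_iff.mp hp)).toMeasure

/-- Adjacency in the random graph encoded by edge indicators `ω`. -/
def gnpAdj {n : ℕ} (ω : Sym2 (Fin n) → Bool) (v w : Fin n) : Prop :=
  v ≠ w ∧ ω s(v, w) = true

instance {n : ℕ} (ω : Sym2 (Fin n) → Bool) : DecidableRel (gnpAdj ω) := fun v w => by
  unfold gnpAdj; infer_instance

/-- Degree of `v` in the random graph encoded by `ω`. -/
def gnpDeg {n : ℕ} (ω : Sym2 (Fin n) → Bool) (v : Fin n) : ℕ :=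
  (Finset.univ.filter fun w => gnpAdj ω v w).card

section Aux

/-- weight of a configuration -/
def gnpW {n : ℕ} (p : ℝ) (ω : Sym2 (Fin n) → Bool) : ℝ :=
  ∏ e, if ω e then p else 1 - p

lemma gnpW_nonneg {n : ℕ} {p : ℝ} (h0 : 0 ≤ p) (h1 : p ≤ 1) (ω : Sym2 (Fin n) → Bool) :
    0 ≤ gnpW p ω :=
  Finset.prod_nonneg fun e _ => by split <;> linarith

lemma sum_biUnion_le_sum' {α β : Type*} [DecidableEq α] (t : Finset β) (u : β → Finset α)
    (g : α → ℝ) (hg : ∀ a, 0 ≤ g a) :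
    ∑ a ∈ t.biUnion u, g a ≤ ∑ b ∈ t, ∑ a ∈ u b, g a := by
  classical
  induction t using Finset.induction_on with
  | empty => simp
  | @insert b t hb ih =>
      rw [Finset.biUnion_insert, Finset.sum_insert hb]
      have hsplit : (u b) ∪ (t.biUnion u) = (u b) ∪ ((t.biUnion u) \ (u b)) := by
        rw [Finset.union_sdiff_self_eq_union]
      have h1 : ∑ a ∈ (u b) ∪ (t.biUnion u), g a
          = ∑ a ∈ u b, g a + ∑ a ∈ (t.biUnion u) \ (u b), g a := by
        rw [hsplit, Finset.sum_union Finset.disjoint_sdiff]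
      have h2 : ∑ a ∈ (t.biUnion u) \ (u b), g a ≤ ∑ a ∈ t.biUnion u, g a :=
        Finset.sum_le_sum_of_subset_of_nonneg (Finset.sdiff_subset) (fun a _ _ => hg a)
      linarith

lemma gnpMeasure_apply (n : ℕ) (p : ℝ) (h0 : 0 ≤ p) (h1 : p ≤ 1)
    (hple : ENNReal.ofReal p ≤ 1) (A : Finset (Sym2 (Fin n) → Bool)) :
    gnpMeasure n p hple ↑A = ENNReal.ofReal (∑ ω ∈ A, gnpW p ω) := by
  classical
  have hsingle : ∀ ω : Sym2 (Fin n) → Bool,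
      gnpMeasure n p hple {ω} = ENNReal.ofReal (gnpW p ω) := by
    intro ω
    rw [← Set.univ_pi_singleton ω]
    rw [gnpMeasure, Measure.pi_pi]
    rw [gnpW, ENNReal.ofReal_prod_of_nonneg (fun e _ => by split <;> linarith)]
    refine Finset.prod_congr rfl fun e _ => ?_
    rw [PMF.toMeasure_apply_singleton _ _ (measurableSet_singleton _), PMF.bernoulli_apply]
    cases h : ω e <;> simp [h, ENNReal.ofReal_sub _ h0, ENNReal.ofReal_one] <;> rfl
  have hs : (↑A : Set (Sym2 (Fin n) → Bool)) = ⋃ ω ∈ A, ({ω} : Set _) := by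
    ext ω; simp
  rw [ENNReal.ofReal_sum_of_nonneg (fun ω _ => gnpW_nonneg h0 h1 ω)]
  calc gnpMeasure n p hple ↑A
      = gnpMeasure n p hple (⋃ ω ∈ A, ({ω} : Set _)) := by rw [← hs]
    _ = ∑ ω ∈ A, gnpMeasure n p hple {ω} := by
        rw [measure_biUnion_finset ?_ (fun _ _ => MeasurableSet.of_discrete)]
        intro a _ b _ hab
        simp [Function.onFun, Set.disjoint_singleton_left, hab]
    _ = _ := Finset.sum_congr rfl fun ω _ => hsingle ω

lemma gnp_sum_prod_ind {n : ℕ} (p : ℝ) (D : Finset (Sym2 (Fin n))) :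
    ∑ ω : Sym2 (Fin n) → Bool,
      gnpW p ω * ∏ e ∈ D, (if ω e then (0:ℝ) else 1)
      = (1 - p) ^ D.card := by
  classical
  have key : ∀ ω : Sym2 (Fin n) → Bool,
      gnpW p ω * ∏ e ∈ D, (if ω e then (0:ℝ) else 1)
      = ∏ e, ((if ω e then p else 1 - p) *
          (if e ∈ D then (if ω e then (0:ℝ) else 1) else 1)) := by
    intro ω
    rw [Finset.prod_mul_distrib, gnpW]
    congr 1
    rw [Finset.prod_ite_mem, Finset.univ_inter]
  simp_rw [key]
  have := Finset.prod_univ_sum (fun _ : Sym2 (Fin n) => (Finset.univ : Finset Bool))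
    (fun e b => (if b then p else 1 - p) * (if e ∈ D then (if b then (0:ℝ) else 1) else 1))
  rw [Fintype.piFinset_univ] at this
  rw [← this]
  have : ∀ e : Sym2 (Fin n),
      (∑ b : Bool, (if b then p else 1 - p) * (if e ∈ D then (if b then (0:ℝ) else 1) else 1))
      = if e ∈ D then (1 - p) else 1 := by
    intro e
    rw [Fintype.sum_bool]
    by_cases h : e ∈ D <;> simp [h]
  simp_rw [this]
  rw [Finset.prod_ite_mem, Finset.univ_inter, Finset.prod_const]

lemma gnp_sum_W {n : ℕ} (p : ℝ) :
    ∑ ω : Sym2 (Fin n) → Bool, gnpW p ω = 1 := by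
  have h := gnp_sum_prod_ind (n := n) p ∅
  simpa using h

lemma gnp_expansion {n : ℕ} (p : ℝ) {ι : Type*} [DecidableEq ι] (U : Finset ι)
    (blk : ι → Finset (Sym2 (Fin n))) (m : ℕ)
    (hcard : ∀ u ∈ U, (blk u).card = m)
    (hdisj : (U : Set ι).PairwiseDisjoint blk) (c : ℝ) :
    ∑ ω : Sym2 (Fin n) → Bool,
      gnpW p ω * ∏ u ∈ U, (1 + c * ∏ e ∈ blk u, (if ω e then (0:ℝ) else 1))
      = (1 + c * (1 - p) ^ m) ^ U.card := by
  classical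
  have expand : ∀ ω : Sym2 (Fin n) → Bool,
      ∏ u ∈ U, (1 + c * ∏ e ∈ blk u, (if ω e then (0:ℝ) else 1))
      = ∑ A ∈ U.powerset, c ^ A.card *
          ∏ e ∈ A.biUnion blk, (if ω e then (0:ℝ) else 1) := by
    intro ω
    have := Finset.prod_add (fun u => c * ∏ e ∈ blk u, (if ω e then (0:ℝ) else 1))
      (fun _ => (1:ℝ)) U
    simp only [Finset.prod_const_one, mul_one] at this
    have h1 : ∀ u ∈ U, (1:ℝ) + c * ∏ e ∈ blk u, (if ω e then (0:ℝ) else 1)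
        = (c * ∏ e ∈ blk u, (if ω e then (0:ℝ) else 1)) + 1 := fun _ _ => by ring
    rw [Finset.prod_congr rfl h1, this]
    refine Finset.sum_congr rfl fun A hA => ?_
    rw [Finset.prod_mul_distrib, Finset.prod_const]
    congr 1
    exact (Finset.prod_biUnion (fun x hx y hy hxy =>
      hdisj (Finset.mem_powerset.1 hA hx) (Finset.mem_powerset.1 hA hy) hxy)).symm
  simp_rw [expand, Finset.mul_sum]
  rw [Finset.sum_comm]
  have hterm : ∀ A ∈ U.powerset,
      (∑ ω : Sym2 (Fin n) → Bool, gnpW p ω *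
        (c ^ A.card * ∏ e ∈ A.biUnion blk, (if ω e then (0:ℝ) else 1)))
      = (c * (1 - p) ^ m) ^ A.card := by
    intro A hA
    have hsub := Finset.mem_powerset.1 hA
    have : ∀ ω : Sym2 (Fin n) → Bool, gnpW p ω *
        (c ^ A.card * ∏ e ∈ A.biUnion blk, (if ω e then (0:ℝ) else 1))
        = c ^ A.card * (gnpW p ω * ∏ e ∈ A.biUnion blk, (if ω e then (0:ℝ) else 1)) :=
      fun ω => by ring
    simp_rw [this, ← Finset.mul_sum, gnp_sum_prod_ind]
    rw [Finset.card_biUnion (fun x hx y hy hxy =>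
      hdisj (hsub hx) (hsub hy) hxy)]
    have : ∑ u ∈ A, (blk u).card = ∑ u ∈ A, m :=
      Finset.sum_congr rfl fun u hu => hcard u (hsub hu)
    rw [this, Finset.sum_const, smul_eq_mul, mul_pow, ← pow_mul, mul_comm m]
  rw [Finset.sum_congr rfl hterm]
  have hp2 := Finset.prod_add (fun _ : ι => c * (1 - p) ^ m) (fun _ => (1:ℝ)) U
  simp only [Finset.prod_const, one_pow, mul_one] at hp2
  rw [← hp2, add_comm]

open scoped Classical in
lemma gnp_config_bound {n : ℕ} {p γ : ℝ} (h0 : 0 ≤ p) (h1 : p ≤ 1) (hγ : 0 < γ)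
    {m K : ℕ} (S : Finset (Fin n)) (T : Fin K → Finset (Fin n))
    (hdisjT : ∀ i j, i ≠ j → Disjoint (T i) (T j))
    (hcardT : ∀ i, (T i).card = m)
    (hS : γ * n ≤ (S.card : ℝ)) :
    ∑ ω ∈ Finset.univ.filter (fun ω => ∀ i : Fin K,
        ((S.filter fun v => ¬ ∃ w ∈ T i, gnpAdj ω v w).card : ℝ)
          ≤ (1 - p) ^ m / 4 * (γ * n)), gnpW p ω
      ≤ (4:ℝ) ^ ((1-p)^m * γ * K / 4 * n)
        * (1 - 3/4 * (1-p)^m) ^ ((K:ℝ) * (γ * n - K * m)) := by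
  classical
  set q : ℝ := (1-p)^m with hq
  have hq0 : 0 ≤ q := pow_nonneg (by linarith) m
  have hq1 : q ≤ 1 := pow_le_one₀ (by linarith) (by linarith)
  set r : ℝ := 1 - 3/4 * q with hr
  have hr0 : (1/4 : ℝ) ≤ r := by rw [hr]; nlinarith
  have hr1 : r ≤ 1 := by rw [hr]; nlinarith
  set c : ℝ := q * γ * K / 4 * n with hc
  have hc0 : 0 ≤ c := by
    have : (0:ℝ) ≤ (K:ℝ) := Nat.cast_nonneg K
    have : (0:ℝ) ≤ (n:ℝ) := Nat.cast_nonneg n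
    positivity
  set SU : Finset (Fin n) := S \ Finset.univ.biUnion T with hSU
  have hSUmem : ∀ v ∈ SU, v ∈ S ∧ ∀ j, v ∉ T j := by
    intro v hv
    rw [hSU, Finset.mem_sdiff] at hv
    refine ⟨hv.1, fun j hj => hv.2 ?_⟩
    exact Finset.mem_biUnion.2 ⟨j, Finset.mem_univ j, hj⟩
  set blk : Fin n × Fin K → Finset (Sym2 (Fin n)) :=
    fun u => (T u.2).image (fun w => s(u.1, w)) with hblk
  set U : Finset (Fin n × Fin K) := SU ×ˢ Finset.univ with hU
  have hmemU : ∀ u ∈ U, u.1 ∈ SU := fun u hu => (Finset.mem_product.1 hu).1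
  have hblkcard : ∀ u ∈ U, (blk u).card = m := by
    intro u hu
    rw [hblk]
    rw [Finset.card_image_of_injOn, hcardT]
    intro w hw w' hw' hww'
    rcases Sym2.eq_iff.1 hww' with ⟨_, h⟩ | ⟨h1, h2⟩
    · exact h
    · exact absurd (Finset.mem_coe.1 hw') (h1 ▸ (hSUmem u.1 (hmemU u hu)).2 u.2)
  have hdisjblk : (↑U : Set (Fin n × Fin K)).PairwiseDisjoint blk := by
    intro u hu u' hu' huu'
    rw [Function.onFun, Finset.disjoint_left]
    intro e he he'
    rw [hblk] at he he'
    obtain ⟨w, hw, hew⟩ := Finset.mem_image.1 he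
    obtain ⟨w', hw', hew'⟩ := Finset.mem_image.1 he'
    have hu1 := hSUmem u.1 (hmemU u (by simpa using hu))
    have hu'1 := hSUmem u'.1 (hmemU u' (by simpa using hu'))
    have heq : s(u.1, w) = s(u'.1, w') := by rw [hew, hew']
    rcases Sym2.eq_iff.1 heq with ⟨hv, hw2⟩ | ⟨hv, hw2⟩
    · -- u.1 = u'.1, w = w'
      subst hw2
      have : u.2 = u'.2 := by
        by_contra hne
        exact (Finset.disjoint_left.1 (hdisjT _ _ hne) hw) hw'
      exact huu' (Prod.ext hv this)
    · -- u.1 = w' ∈ T u'.2 : contradiction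
      exact (hu1.2 u'.2 (hv ▸ hw')).elim
  -- indicator products
  set x : Fin n × Fin K → (Sym2 (Fin n) → Bool) → ℝ :=
    fun u ω => ∏ e ∈ blk u, (if ω e then (0:ℝ) else 1) with hx
  set k : (Sym2 (Fin n) → Bool) → ℕ :=
    fun ω => (U.filter fun u => ∀ e ∈ blk u, ω e = false).card with hk
  have prodeq : ∀ ω, ∏ u ∈ U, (1 + (-(3/4)) * x u ω) = (1/4 : ℝ) ^ (k ω) := by
    intro ω
    have : ∀ u ∈ U, 1 + (-(3/4)) * x u ω
        = if (∀ e ∈ blk u, ω e = false) then (1/4 : ℝ) else 1 := by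
      intro u _
      by_cases h : ∀ e ∈ blk u, ω e = false
      · have : x u ω = 1 := Finset.prod_eq_one fun e he => by
          rw [h e he]; simp
        rw [this, if_pos h]; norm_num
      · push_neg at h
        obtain ⟨e, he, hne⟩ := h
        have hne' : ω e = true := by simpa using hne
        have : x u ω = 0 := Finset.prod_eq_zero he (by rw [hne']; simp)
        rw [this, if_neg (by push_neg; exact ⟨e, he, hne⟩)]
        norm_num
    rw [Finset.prod_congr rfl this, Finset.prod_ite, Finset.prod_const, Finset.prod_const,
      one_pow, mul_one, hk]
  have hkbound : ∀ ω, (∀ i : Fin K,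
      ((S.filter fun v => ¬ ∃ w ∈ T i, gnpAdj ω v w).card : ℝ)
        ≤ q / 4 * (γ * n)) → (k ω : ℝ) ≤ c := by
    intro ω hω
    have hfib : k ω = ∑ i : Fin K,
        ((U.filter fun u => ∀ e ∈ blk u, ω e = false).filter fun u => u.2 = i).card := by
      rw [hk]
      exact Finset.card_eq_sum_card_fiberwise (fun u _ => Finset.mem_univ u.2)
    have hfle : ∀ i : Fin K,
        (((U.filter fun u => ∀ e ∈ blk u, ω e = false).filter fun u => u.2 = i).card : ℝ)
          ≤ ((S.filter fun v => ¬ ∃ w ∈ T i, gnpAdj ω v w).card : ℝ) := by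
      intro i
      have : ((U.filter fun u => ∀ e ∈ blk u, ω e = false).filter fun u => u.2 = i).card
          ≤ (S.filter fun v => ¬ ∃ w ∈ T i, gnpAdj ω v w).card := by
        apply Finset.card_le_card_of_injOn Prod.fst
        · intro u hu
          simp only [Finset.mem_coe, Finset.mem_filter] at hu
          obtain ⟨⟨huU, hall⟩, hui⟩ := hu
          rw [Finset.mem_coe, Finset.mem_filter]
          refine ⟨(hSUmem u.1 (hmemU u huU)).1, ?_⟩
          rintro ⟨w, hw, -, hadj⟩
          have hwT : w ∈ T u.2 := by rw [hui]; exact hw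
          have : ω s(u.1, w) = false := hall _ (Finset.mem_image_of_mem _ hwT)
          rw [this] at hadj
          exact Bool.false_ne_true hadj
        · intro u hu u' hu' h
          simp only [Finset.mem_coe, Finset.mem_filter] at hu hu'
          exact Prod.ext h (hu.2.trans hu'.2.symm)
      exact_mod_cast this
    calc (k ω : ℝ) = ∑ i : Fin K,
          (((U.filter fun u => ∀ e ∈ blk u, ω e = false).filter fun u => u.2 = i).card : ℝ) := by
          rw [hfib]; push_cast; ring
      _ ≤ ∑ i : Fin K, ((S.filter fun v => ¬ ∃ w ∈ T i, gnpAdj ω v w).card : ℝ) :=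
          Finset.sum_le_sum fun i _ => hfle i
      _ ≤ ∑ _i : Fin K, q / 4 * (γ * n) := Finset.sum_le_sum fun i _ => hω i
      _ = c := by
          rw [Finset.sum_const, Finset.card_univ, Fintype.card_fin, nsmul_eq_mul, hc]
          ring
  have step1 : ∀ ω ∈ Finset.univ.filter (fun ω => ∀ i : Fin K,
      ((S.filter fun v => ¬ ∃ w ∈ T i, gnpAdj ω v w).card : ℝ) ≤ q / 4 * (γ * n)),
      gnpW p ω ≤ gnpW p ω * ((4:ℝ) ^ c * ∏ u ∈ U, (1 + (-(3/4)) * x u ω)) := by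
    intro ω hω
    rw [Finset.mem_filter] at hω
    have hk' : (k ω : ℝ) ≤ c := hkbound ω hω.2
    have h14 : ((1:ℝ)/4) ^ c ≤ (1/4 : ℝ) ^ (k ω : ℝ) :=
      Real.rpow_le_rpow_of_exponent_ge (by norm_num) (by norm_num) hk'
    have hprod : (1:ℝ) ≤ (4:ℝ) ^ c * ∏ u ∈ U, (1 + (-(3/4)) * x u ω) := by
      rw [prodeq ω, ← Real.rpow_natCast (1/4 : ℝ) (k ω)]
      calc (1:ℝ) = (4:ℝ) ^ c * (1/4 : ℝ) ^ c := by
            rw [← Real.mul_rpow (by norm_num) (by norm_num)]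
            norm_num
        _ ≤ _ := mul_le_mul_of_nonneg_left h14 (Real.rpow_nonneg (by norm_num) c)
    exact le_mul_of_one_le_right (gnpW_nonneg h0 h1 ω) hprod
  have hUcard : U.card = SU.card * K := by
    rw [hU, Finset.card_product, Finset.card_univ, Fintype.card_fin]
  have hexp : (K:ℝ) * (γ * n - K * m) ≤ (U.card : ℝ) := by
    have hB : ((Finset.univ.biUnion T).card : ℝ) ≤ (K:ℝ) * m := by
      have h2 : (Finset.univ.biUnion T).card ≤ ∑ i : Fin K, (T i).card :=
        Finset.card_biUnion_le
      have h3 : ∑ i : Fin K, (T i).card = K * m := by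
        simp [hcardT, Finset.sum_const, Finset.card_univ]
      rw [h3] at h2
      exact_mod_cast h2
    have hSUc : (S.card : ℝ) ≤ (SU.card : ℝ) + (K:ℝ) * m := by
      have := Finset.card_le_card_sdiff_add_card (s := S) (t := Finset.univ.biUnion T)
      rw [← hSU] at this
      calc (S.card : ℝ) ≤ (SU.card : ℝ) + ((Finset.univ.biUnion T).card : ℝ) := by
            exact_mod_cast this
        _ ≤ _ := by linarith
    have hSUn : γ * n - (K:ℝ) * m ≤ (SU.card : ℝ) := by linarith
    rw [hUcard]
    push_cast
    have hK0 : (0:ℝ) ≤ K := Nat.cast_nonneg K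
    nlinarith
  calc ∑ ω ∈ Finset.univ.filter (fun ω => ∀ i : Fin K,
        ((S.filter fun v => ¬ ∃ w ∈ T i, gnpAdj ω v w).card : ℝ)
          ≤ q / 4 * (γ * n)), gnpW p ω
      ≤ ∑ ω ∈ Finset.univ.filter (fun ω => ∀ i : Fin K,
        ((S.filter fun v => ¬ ∃ w ∈ T i, gnpAdj ω v w).card : ℝ)
          ≤ q / 4 * (γ * n)),
          gnpW p ω * ((4:ℝ) ^ c * ∏ u ∈ U, (1 + (-(3/4)) * x u ω)) :=
        Finset.sum_le_sum step1
    _ ≤ ∑ ω : Sym2 (Fin n) → Bool,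
          gnpW p ω * ((4:ℝ) ^ c * ∏ u ∈ U, (1 + (-(3/4)) * x u ω)) := by
        apply Finset.sum_le_sum_of_subset_of_nonneg (Finset.filter_subset _ _)
        intro ω _ _
        apply mul_nonneg (gnpW_nonneg h0 h1 ω)
        apply mul_nonneg (Real.rpow_nonneg (by norm_num) c)
        rw [prodeq ω]
        positivity
    _ = (4:ℝ) ^ c * ∑ ω : Sym2 (Fin n) → Bool,
          gnpW p ω * ∏ u ∈ U, (1 + (-(3/4)) * x u ω) := by
        rw [Finset.mul_sum]
        exact Finset.sum_congr rfl fun ω _ => by ring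
    _ = (4:ℝ) ^ c * (1 + (-(3/4)) * (1 - p) ^ m) ^ U.card := by
        rw [gnp_expansion p U blk m hblkcard hdisjblk (-(3/4))]
    _ ≤ (4:ℝ) ^ c * r ^ ((K:ℝ) * (γ * n - K * m)) := by
        have hre : (1 + (-(3/4)) * (1 - p) ^ m) = r := by rw [hr, hq]; ring
        rw [hre]
        apply mul_le_mul_of_nonneg_left _ (Real.rpow_nonneg (by norm_num) _)
        have : (r : ℝ) ^ U.card = r ^ ((U.card : ℕ) : ℝ) := (Real.rpow_natCast r U.card).symm
        rw [this]
        exact Real.rpow_le_rpow_of_exponent_ge (lt_of_lt_of_le (by norm_num) hr0) hr1 hexp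

end Aux
/-- Whp `G(n,p)` contains no sets `S, T₁, …, T_K` with the `Tᵢ` pairwise disjoint `m`-sets,
`|S| ≥ γ n`, and for every `i`, all but at most `((1-p)^m/4) γ n` vertices of `S` adjacent
to some vertex of `Tᵢ`, provided `K > 4 / (γ (1-p)^{2m})`. -/
theorem stmt_8 (m : ℕ) (γ p : ℝ) (hγ : 0 < γ) (hp : 0 < p) (hp1 : p < 1) (K : ℕ)
    (hK : (K : ℝ) > 4 / (γ * (1 - p) ^ (2 * m))) (hple : ENNReal.ofReal p ≤ 1) :
    Tendsto (fun n : ℕ =>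
        gnpMeasure n p hple {ω | ¬ ∃ (S : Finset (Fin n)) (T : Fin K → Finset (Fin n)),
          (∀ i j, i ≠ j → Disjoint (T i) (T j)) ∧ (∀ i, (T i).card = m) ∧
          γ * n ≤ (S.card : ℝ) ∧
          ∀ i, ((S.filter fun v => ¬ ∃ w ∈ T i, gnpAdj ω v w).card : ℝ) ≤
            (1 - p) ^ m / 4 * (γ * n)})
      atTop (nhds 1) := by
  classical
  have h0 : (0:ℝ) ≤ p := hp.le
  have h1 : p ≤ 1 := hp1.le
  set q : ℝ := (1 - p) ^ m with hq
  have hq0 : 0 < q := pow_pos (by linarith) m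
  have hq1 : q ≤ 1 := pow_le_one₀ (by linarith) (by linarith)
  set r : ℝ := 1 - 3/4 * q with hr
  have hr0 : (0:ℝ) < r := by rw [hr]; nlinarith
  have hr1 : r ≤ 1 := by rw [hr]; nlinarith
  set d : ℝ := q * γ * K / 4 with hd
  have hK0 : (0:ℝ) ≤ K := Nat.cast_nonneg K
  have hd0 : 0 ≤ d := by rw [hd]; positivity
  set ρ : ℝ := 2 * (4:ℝ) ^ d * r ^ ((K:ℝ) * γ) with hρ
  have hρ0 : 0 < ρ := by
    rw [hρ]
    have := Real.rpow_pos_of_pos (show (0:ℝ) < 4 by norm_num) d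
    have := Real.rpow_pos_of_pos hr0 ((K:ℝ) * γ)
    positivity
  -- logarithmic estimate: ρ < 1
  have hρ1 : ρ < 1 := by
    have hlog4 : Real.log 4 = 2 * Real.log 2 := by
      rw [show (4:ℝ) = 2 ^ (2:ℕ) by norm_num, Real.log_pow]
      push_cast; ring
    have hlogρ : Real.log ρ = Real.log 2 + d * Real.log 4 + ((K:ℝ) * γ) * Real.log r := by
      rw [hρ, Real.log_mul (by positivity)
          (ne_of_gt (Real.rpow_pos_of_pos hr0 _)),
        Real.log_mul (by norm_num) (ne_of_gt (Real.rpow_pos_of_pos (by norm_num) d)),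
        Real.log_rpow (by norm_num), Real.log_rpow hr0]
    have hlogr : Real.log r ≤ -(3/4 * q) := by
      have := Real.log_le_sub_one_of_pos hr0
      rw [hr] at this ⊢
      linarith
    have hKq : 4 < (K:ℝ) * (γ * (q * q)) := by
      have hpow : (1 - p) ^ (2 * m) = q * q := by
        rw [two_mul, pow_add, hq]
      have hpos : 0 < γ * (1 - p) ^ (2 * m) := by
        rw [hpow]; positivity
      have := (div_lt_iff₀ hpos).1 hK
      rw [hpow] at this
      nlinarith [this]
    have hs4 : 4 < q * γ * K := by nlinarith [hKq, hq0.le, hq1, hγ.le, hK0]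
    have hL1 : Real.log 2 < 0.6931471808 := Real.log_two_lt_d9
    have hL0 : 0 < Real.log 2 := Real.log_pos (by norm_num)
    have hlogneg : Real.log ρ < 0 := by
      have hterm : ((K:ℝ) * γ) * Real.log r ≤ ((K:ℝ) * γ) * (-(3/4 * q)) :=
        mul_le_mul_of_nonneg_left hlogr (by positivity)
      rw [hlogρ, hlog4, hd]
      have hfin : Real.log 2 + q * γ * ↑K / 4 * (2 * Real.log 2)
          + (↑K * γ) * (-(3/4 * q)) < 0 := by
        nlinarith [mul_nonneg (mul_nonneg hq0.le hγ.le) hK0,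
          mul_nonneg (sub_pos.2 hs4).le (sub_pos.2 hL1).le]
      calc Real.log 2 + q * γ * ↑K / 4 * (2 * Real.log 2) + (↑K * γ) * Real.log r
          ≤ Real.log 2 + q * γ * ↑K / 4 * (2 * Real.log 2) + (↑K * γ) * (-(3/4 * q)) := by
            linarith
        _ < 0 := hfin
    exact (Real.log_neg_iff hρ0).1 hlogneg
  have hρabs : |ρ| < 1 := by rwa [abs_of_pos hρ0]
  -- the dominating sequence
  set Cst : ℝ := r ^ (-((K:ℝ) * ((K:ℝ) * m))) with hCst
  have hCst0 : 0 < Cst := Real.rpow_pos_of_pos hr0 _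
  set F : ℕ → ℝ := fun n => (2:ℝ) ^ n * ((n:ℝ) ^ m) ^ K *
      ((4:ℝ) ^ (q * γ * ↑K / 4 * ↑n) * r ^ ((K:ℝ) * (γ * ↑n - ↑K * ↑m))) with hF
  have hFeq : ∀ n : ℕ, F n = Cst * ((n:ℝ) ^ (m * K) * ρ ^ n) := by
    intro n
    simp only [hF]
    have e1 : (K:ℝ) * (γ * ↑n - ↑K * ↑m) = ((K:ℝ) * γ) * ↑n + (-((K:ℝ) * ((K:ℝ) * m))) := by
      ring
    rw [e1, Real.rpow_add hr0, Real.rpow_mul hr0.le, Real.rpow_natCast]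
    have e2 : q * γ * ↑K / 4 * ↑n = d * ↑n := by rw [hd]
    rw [e2, Real.rpow_mul (by norm_num : (0:ℝ) ≤ 4), Real.rpow_natCast]
    rw [hρ, hCst]
    ring
  have hFlim : Tendsto F atTop (nhds 0) := by
    have h := (tendsto_pow_const_mul_const_pow_of_abs_lt_one (m * K) hρabs).const_mul Cst
    rw [mul_zero] at h
    exact h.congr fun n => (hFeq n).symm
  -- the bad-event sums
  set B : ∀ n : ℕ, ℝ := fun n =>
    ∑ ω ∈ Finset.univ.filter (fun ω : Sym2 (Fin n) → Bool =>
      ∃ (S : Finset (Fin n)) (T : Fin K → Finset (Fin n)),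
        (∀ i j, i ≠ j → Disjoint (T i) (T j)) ∧ (∀ i, (T i).card = m) ∧
        γ * n ≤ (S.card : ℝ) ∧
        ∀ i, ((S.filter fun v => ¬ ∃ w ∈ T i, gnpAdj ω v w).card : ℝ) ≤
          q / 4 * (γ * n)), gnpW p ω with hB
  have hB0 : ∀ n, 0 ≤ B n := fun n =>
    Finset.sum_nonneg fun ω _ => gnpW_nonneg h0 h1 ω
  -- union bound: B n ≤ F n
  have hBF : ∀ n, B n ≤ F n := by
    intro n
    set cfgs : Finset (Finset (Fin n) × (Fin K → Finset (Fin n))) :=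
      ((Finset.univ : Finset (Finset (Fin n))) ×ˢ
        Fintype.piFinset fun _ : Fin K => Finset.powersetCard m (Finset.univ : Finset (Fin n))).filter
        (fun ST => (∀ i j, i ≠ j → Disjoint (ST.2 i) (ST.2 j)) ∧ γ * n ≤ (ST.1.card : ℝ))
      with hcfgs
    set E : Finset (Fin n) × (Fin K → Finset (Fin n)) → Finset (Sym2 (Fin n) → Bool) :=
      fun ST => Finset.univ.filter (fun ω => ∀ i : Fin K,
        ((ST.1.filter fun v => ¬ ∃ w ∈ ST.2 i, gnpAdj ω v w).card : ℝ)
          ≤ q / 4 * (γ * n)) with hE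
    have hsub : Finset.univ.filter (fun ω : Sym2 (Fin n) → Bool =>
        ∃ (S : Finset (Fin n)) (T : Fin K → Finset (Fin n)),
          (∀ i j, i ≠ j → Disjoint (T i) (T j)) ∧ (∀ i, (T i).card = m) ∧
          γ * n ≤ (S.card : ℝ) ∧
          ∀ i, ((S.filter fun v => ¬ ∃ w ∈ T i, gnpAdj ω v w).card : ℝ) ≤
            q / 4 * (γ * n)) ⊆ cfgs.biUnion E := by
      intro ω hω
      rw [Finset.mem_filter] at hω
      obtain ⟨-, S, T, hdj, hcards, hSc, hbnd⟩ := hω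
      refine Finset.mem_biUnion.2 ⟨(S, T), ?_, ?_⟩
      · rw [hcfgs, Finset.mem_filter]
        refine ⟨Finset.mem_product.2 ⟨Finset.mem_univ _, ?_⟩, hdj, hSc⟩
        refine Fintype.mem_piFinset.2 fun i => ?_
        exact Finset.mem_powersetCard.2 ⟨Finset.subset_univ _, hcards i⟩
      · rw [hE, Finset.mem_filter]
        exact ⟨Finset.mem_univ _, hbnd⟩
    have hcfgcard : ((cfgs.card : ℝ)) ≤ (2:ℝ) ^ n * ((n:ℝ) ^ m) ^ K := by
      have hcard1 : cfgs.card ≤ 2 ^ n * (n.choose m) ^ K := by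
        calc cfgs.card ≤ ((Finset.univ : Finset (Finset (Fin n))) ×ˢ
              Fintype.piFinset fun _ : Fin K =>
                Finset.powersetCard m (Finset.univ : Finset (Fin n))).card := by
              rw [hcfgs]; exact Finset.card_filter_le _ _
          _ = 2 ^ n * (n.choose m) ^ K := by
              rw [Finset.card_product, Fintype.card_piFinset]
              simp [Finset.card_powersetCard, Finset.card_univ]
        
      have hcard2 : 2 ^ n * (n.choose m) ^ K ≤ 2 ^ n * (n ^ m) ^ K := by
        apply Nat.mul_le_mul_left
        exact Nat.pow_le_pow_left (Nat.choose_le_pow n m) K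
      calc ((cfgs.card : ℝ)) ≤ ((2 ^ n * (n ^ m) ^ K : ℕ) : ℝ) := by
            exact_mod_cast hcard1.trans hcard2
        _ = (2:ℝ) ^ n * ((n:ℝ) ^ m) ^ K := by push_cast; ring
    have hEbnd : ∀ ST ∈ cfgs, ∑ ω ∈ E ST, gnpW p ω
        ≤ (4:ℝ) ^ (q * γ * ↑K / 4 * ↑n) * r ^ ((K:ℝ) * (γ * ↑n - ↑K * ↑m)) := by
      intro ST hST
      rw [hcfgs, Finset.mem_filter] at hST
      obtain ⟨hmem, hdj, hSc⟩ := hST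
      have hcards : ∀ i, (ST.2 i).card = m := by
        intro i
        have := Fintype.mem_piFinset.1 (Finset.mem_product.1 hmem).2 i
        exact (Finset.mem_powersetCard.1 this).2
      have hcb := gnp_config_bound h0 h1 hγ ST.1 ST.2 hdj hcards hSc
      simp only [hE]
      simp only [← hq] at hcb
      convert hcb using 2
    calc B n ≤ ∑ ω ∈ cfgs.biUnion E, gnpW p ω := by
          simp only [hB]
          exact Finset.sum_le_sum_of_subset_of_nonneg hsub
            (fun ω _ _ => gnpW_nonneg h0 h1 ω)
      _ ≤ ∑ ST ∈ cfgs, ∑ ω ∈ E ST, gnpW p ω :=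
          sum_biUnion_le_sum' cfgs E (gnpW p) (gnpW_nonneg h0 h1)
      _ ≤ ∑ _ST ∈ cfgs, ((4:ℝ) ^ (q * γ * ↑K / 4 * ↑n) * r ^ ((K:ℝ) * (γ * ↑n - ↑K * ↑m))) :=
          Finset.sum_le_sum hEbnd
      _ = (cfgs.card : ℝ) * ((4:ℝ) ^ (q * γ * ↑K / 4 * ↑n)
            * r ^ ((K:ℝ) * (γ * ↑n - ↑K * ↑m))) := by
          rw [Finset.sum_const, nsmul_eq_mul]
      _ ≤ F n := by
          simp only [hF]
          apply mul_le_mul_of_nonneg_right hcfgcard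
          have := Real.rpow_nonneg (show (0:ℝ) ≤ 4 by norm_num) (q * γ * ↑K / 4 * ↑n)
          have := Real.rpow_nonneg hr0.le ((K:ℝ) * (γ * ↑n - ↑K * ↑m))
          positivity
  have hBlim : Tendsto B atTop (nhds 0) := squeeze_zero hB0 hBF hFlim
  -- from bad to good
  have hgood : ∀ n : ℕ,
      gnpMeasure n p hple {ω | ¬ ∃ (S : Finset (Fin n)) (T : Fin K → Finset (Fin n)),
          (∀ i j, i ≠ j → Disjoint (T i) (T j)) ∧ (∀ i, (T i).card = m) ∧
          γ * n ≤ (S.card : ℝ) ∧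
          ∀ i, ((S.filter fun v => ¬ ∃ w ∈ T i, gnpAdj ω v w).card : ℝ) ≤
            q / 4 * (γ * n)} = ENNReal.ofReal (1 - B n) := by
    intro n
    have hseteq : {ω : Sym2 (Fin n) → Bool |
        ¬ ∃ (S : Finset (Fin n)) (T : Fin K → Finset (Fin n)),
          (∀ i j, i ≠ j → Disjoint (T i) (T j)) ∧ (∀ i, (T i).card = m) ∧
          γ * n ≤ (S.card : ℝ) ∧
          ∀ i, ((S.filter fun v => ¬ ∃ w ∈ T i, gnpAdj ω v w).card : ℝ) ≤
            q / 4 * (γ * n)}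
        = ↑(Finset.univ.filter (fun ω : Sym2 (Fin n) → Bool =>
          ¬ ∃ (S : Finset (Fin n)) (T : Fin K → Finset (Fin n)),
          (∀ i j, i ≠ j → Disjoint (T i) (T j)) ∧ (∀ i, (T i).card = m) ∧
          γ * n ≤ (S.card : ℝ) ∧
          ∀ i, ((S.filter fun v => ¬ ∃ w ∈ T i, gnpAdj ω v w).card : ℝ) ≤
            q / 4 * (γ * n))) := by
      ext ω
      simp only [Set.mem_setOf_eq, Finset.coe_filter, Finset.mem_univ, true_and]
    rw [hseteq, gnpMeasure_apply n p h0 h1 hple]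
    congr 1
    have htot := Finset.sum_filter_add_sum_filter_not (Finset.univ : Finset (Sym2 (Fin n) → Bool))
      (fun ω : Sym2 (Fin n) → Bool =>
          ∃ (S : Finset (Fin n)) (T : Fin K → Finset (Fin n)),
          (∀ i j, i ≠ j → Disjoint (T i) (T j)) ∧ (∀ i, (T i).card = m) ∧
          γ * n ≤ (S.card : ℝ) ∧
          ∀ i, ((S.filter fun v => ¬ ∃ w ∈ T i, gnpAdj ω v w).card : ℝ) ≤
            q / 4 * (γ * n)) (gnpW p)
    rw [gnp_sum_W p] at htot
    simp only [hB]
    linarith [htot]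
  have hlim1 : Tendsto (fun n => 1 - B n) atTop (nhds 1) := by
    have := tendsto_const_nhds (x := (1:ℝ)) (f := atTop (α := ℕ)) |>.sub hBlim
    rwa [sub_zero] at this
  have hlim2 : Tendsto (fun n => ENNReal.ofReal (1 - B n)) atTop (nhds 1) := by
    have := (ENNReal.continuous_ofReal.tendsto 1).comp hlim1
    rwa [ENNReal.ofReal_one] at this
  exact hlim2.congr fun n => (hgood n).symm
end

section
/- For all integers n ≥ 2, in the eternal vertex colouring game on the star K_{1,2n+1} played with 3 colours where both players must always use the smallest legally available colour (Alice moving first in each round since the graph has an even number of vertices), Alice has a winning strategy; that is, χ_g^{∞3}(K_{1,2n+1}) ≤ 3. -/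
open Finset

section EternalGame

variable {V : Type*} [Fintype V] [DecidableEq V]

/-- The colour `c` is a legal (re)colouring of `v`: it differs from the current colour of
`v` (if any) and from the colours of all neighbours of `v`. -/
def LegalColour (G : SimpleGraph V) {k : ℕ} (col : V → Option (Fin k)) (v : V) (c : Fin k) :
    Prop :=
  col v ≠ some c ∧ ∀ w, G.Adj v w → col w ≠ some c

/-- The colour `c` is the smallest legal colour for `v` (the greedy choice). -/
def GreedyColour (G : SimpleGraph V) {k : ℕ} (col : V → Option (Fin k)) (v : V) (c : Fin k) :
    Prop :=
  LegalColour G col v c ∧ ∀ c' : Fin k, c' < c → ¬ LegalColour G col v c'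

/-- When all vertices have been coloured in the current round, a new round starts and all
vertices become available again. -/
def availReset (done : Finset V) : Finset V :=
  if done = (Finset.univ : Finset V) then ∅ else done

/-- `BobWins G k aliceGreedy col done turn` : from the position in the eternal vertex
colouring game on `G` with colours `Fin k` where the current (partial) colouring is `col`,
the vertices already (re)coloured in the current round are `done`, and it is Alice's turn iff
`turn = true`, Bob can force a win.  Bob always plays greedily (the smallest legal colour),
and Alice is also required to play greedily iff `aliceGreedy = true`.  Bob wins by picking,
on his turn, a vertex with no legal colour; Alice loses if, whatever legal move she makes
(including when she has none, being then forced to pick an uncolourable vertex), Bob can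
force a win afterwards. -/
inductive BobWins (G : SimpleGraph V) (k : ℕ) (aliceGreedy : Bool) :
    (V → Option (Fin k)) → Finset V → Bool → Prop where
  | bobStuck (col : V → Option (Fin k)) (done : Finset V)
      (h : ∃ v ∉ availReset done, ∀ c, ¬ LegalColour G col v c) :
      BobWins G k aliceGreedy col done false
  | bobMove (col : V → Option (Fin k)) (done : Finset V) (v : V) (c : Fin k)
      (hv : v ∉ availReset done) (hc : GreedyColour G col v c)
      (h : BobWins G k aliceGreedy (Function.update col v (some c))
        (insert v (availReset done)) true) :
      BobWins G k aliceGreedy col done false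
  | aliceMove (col : V → Option (Fin k)) (done : Finset V)
      (h : ∀ v ∉ availReset done, ∀ c : Fin k,
        (if aliceGreedy then GreedyColour G col v c else LegalColour G col v c) →
        BobWins G k aliceGreedy (Function.update col v (some c))
          (insert v (availReset done)) false) :
      BobWins G k aliceGreedy col done true

end EternalGame

/-- The star `K_{1,m}`: vertex `0` is the centre, adjacent to the `m` leaves. -/
def starGraph (m : ℕ) : SimpleGraph (Fin (m + 1)) where
  Adj v w := v ≠ w ∧ (v = 0 ∨ w = 0)
  symm := by constructor; intro v w h; exact ⟨h.1.symm, h.2.symm⟩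
  loopless := by constructor; intro v h; exact h.1 rfl

namespace Stmt14

def cg (ao bo : Option (Fin 3)) : Fin 3 :=
  if ao ≠ some 0 ∧ bo ≠ some 0 then 0 else if ao ≠ some 1 ∧ bo ≠ some 1 then 1 else 2

def Pm (ao bo : Option (Fin 3)) (c : Fin 3) : Prop := ao ≠ some c ∧ bo ≠ some c

instance : ∀ ao bo c, Decidable (Pm ao bo c) := fun _ _ _ => instDecidableAnd

lemma cg_iff : ∀ ao bo c, (Pm ao bo c ∧ ∀ c' < c, ¬ Pm ao bo c') ↔ c = cg ao bo := by decide

lemma cg_props : ∀ ao bo, ao ≠ some (cg ao bo) ∧ bo ≠ some (cg ao bo) := by decide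

lemma legal_leaf {m : ℕ} (col : Fin (m+1) → Option (Fin 3)) {v : Fin (m+1)} (hv : v ≠ 0)
    (c : Fin 3) : LegalColour (starGraph m) col v c ↔ Pm (col v) (col 0) c := by
  constructor
  · rintro ⟨h1, h2⟩
    exact ⟨h1, h2 0 ⟨hv, Or.inr rfl⟩⟩
  · rintro ⟨h1, h2⟩
    refine ⟨h1, ?_⟩
    rintro w ⟨hne, h0 | h0⟩
    · exact absurd h0 hv
    · subst h0; exact h2

lemma legal_center {m : ℕ} (col : Fin (m+1+1) → Option (Fin 3)) {bo : Option (Fin 3)}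
    (hb : ∀ v, v ≠ 0 → col v = bo) (c : Fin 3) :
    LegalColour (starGraph (m+1)) col 0 c ↔ Pm (col 0) bo c := by
  have h1 : (⟨1, by omega⟩ : Fin (m+1+1)) ≠ 0 := by
    intro h; simpa using congrArg Fin.val h
  constructor
  · rintro ⟨hc, h2⟩
    refine ⟨hc, ?_⟩
    rw [← hb _ h1]
    exact h2 _ ⟨Ne.symm h1, Or.inl rfl⟩
  · rintro ⟨hc, h2⟩
    refine ⟨hc, ?_⟩
    intro w hw
    rw [hb w (Ne.symm hw.1)]
    exact h2

lemma greedy_leaf {m : ℕ} (col : Fin (m+1) → Option (Fin 3)) {v : Fin (m+1)} (hv : v ≠ 0)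
    (c : Fin 3) : GreedyColour (starGraph m) col v c ↔ c = cg (col v) (col 0) := by
  rw [← cg_iff]
  unfold GreedyColour
  simp only [legal_leaf col hv]

lemma greedy_center {m : ℕ} (col : Fin (m+1+1) → Option (Fin 3)) {bo : Option (Fin 3)}
    (hb : ∀ v, v ≠ 0 → col v = bo) (c : Fin 3) :
    GreedyColour (starGraph (m+1)) col 0 c ↔ c = cg (col 0) bo := by
  rw [← cg_iff]
  unfold GreedyColour
  simp only [legal_center col hb]

def Inv (n : ℕ) (col : Fin (2*n+1+1) → Option (Fin 3)) (done : Finset (Fin (2*n+1+1)))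
    (turn : Bool) : Prop :=
  (availReset done = ∅ ∧ turn = true ∧
    ((∀ v, col v = none) ∨
      ∃ a b : Fin 3, a ≠ b ∧ col 0 = some a ∧ ∀ v, v ≠ 0 → col v = some b)) ∨
  (0 ∈ availReset done ∧ (turn = true ↔ (availReset done).card % 2 = 0) ∧
    ∃ (a : Fin 3) (bo : Option (Fin 3)), bo ≠ some a ∧ col 0 = some a ∧
      (∀ v, v ≠ 0 → v ∈ availReset done → col v = some (cg bo (some a))) ∧
      (∀ v, v ≠ 0 → v ∉ availReset done → col v = bo))

lemma availReset_eq_empty {V : Type*} [Fintype V] [DecidableEq V] {done : Finset V}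
    (h : done = univ) : availReset done = ∅ := if_pos h

lemma availReset_eq_self {V : Type*} [Fintype V] [DecidableEq V] {done : Finset V}
    (h : done ≠ univ) : availReset done = done := if_neg h

lemma availReset_ne_univ {V : Type*} [Fintype V] [DecidableEq V] [Nonempty V]
    (done : Finset V) : availReset done ≠ univ := by
  unfold availReset
  split
  · exact Ne.symm (Finset.univ_nonempty.ne_empty)
  · assumption

lemma key (n : ℕ) (col : Fin (2*n+1+1) → Option (Fin 3)) (done : Finset (Fin (2*n+1+1)))
    (turn : Bool) (hB : BobWins (starGraph (2*n+1)) 3 true col done turn) :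
    ¬ Inv n col done turn := by
  induction hB with
  | bobStuck col done h =>
    rintro (⟨_, ht, _⟩ | ⟨h0, _, a, bo, hba, hc0, hin, hout⟩)
    · exact Bool.false_ne_true ht
    · obtain ⟨v, hv, hall⟩ := h
      have hv0 : v ≠ 0 := fun h => hv (h ▸ h0)
      refine hall (cg bo (some a)) ?_
      rw [legal_leaf col hv0, hout v hv0 hv, hc0]
      exact ⟨(cg_props bo (some a)).1, (cg_props bo (some a)).2⟩
  | bobMove col done v c hv hc h ih =>
    rintro (⟨_, ht, _⟩ | ⟨h0, ht, a, bo, hba, hc0, hin, hout⟩)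
    · exact Bool.false_ne_true ht
    · have hv0 : v ≠ 0 := fun h => hv (h ▸ h0)
      have hcval : c = cg bo (some a) := by
        have := (greedy_leaf col hv0 c).1 hc
        rwa [hout v hv0 hv, hc0] at this
      apply ih
      have hcard : (insert v (availReset done)).card = (availReset done).card + 1 :=
        Finset.card_insert_of_notMem hv
      by_cases huniv : insert v (availReset done) = univ
      · left
        have hA : availReset (insert v (availReset done)) = ∅ := availReset_eq_empty huniv
        refine ⟨hA, rfl, Or.inr ⟨a, cg bo (some a), ?_, ?_, ?_⟩⟩
        · intro hEq
          exact (cg_props bo (some a)).2 (congrArg some hEq)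
        · rw [Function.update_of_ne (Ne.symm hv0), hc0]
        · intro w hw0
          by_cases hwv : w = v
          · subst hwv; rw [Function.update_self, hcval]
          · rw [Function.update_of_ne hwv]
            have hwD : w ∈ availReset done := by
              have : w ∈ insert v (availReset done) := huniv ▸ Finset.mem_univ w
              rcases Finset.mem_insert.1 this with h | h
              · exact absurd h hwv
              · exact h
            exact hin w hw0 hwD
      · right
        rw [availReset_eq_self huniv]
        refine ⟨Finset.mem_insert_of_mem h0, ?_, a, bo, hba, ?_, ?_, ?_⟩
        · have hodd : ¬ (availReset done).card % 2 = 0 := fun h =>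
            Bool.false_ne_true (ht.mpr h)
          simp only [hcard]
          constructor
          · intro _; omega
          · intro _; trivial
        · rw [Function.update_of_ne (Ne.symm hv0), hc0]
        · intro w hw0 hwD
          by_cases hwv : w = v
          · subst hwv; rw [Function.update_self, hcval]
          · rw [Function.update_of_ne hwv]
            exact hin w hw0 (by
              rcases Finset.mem_insert.1 hwD with h | h
              · exact absurd h hwv
              · exact h)
        · intro w hw0 hwD
          have hwv : w ≠ v := fun h => hwD (by rw [h]; exact Finset.mem_insert_self v _)
          rw [Function.update_of_ne hwv]
          exact hout w hw0 (fun h => hwD (Finset.mem_insert_of_mem h))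
  | aliceMove col done h ih =>
    rintro (⟨hD, _, hcol⟩ | ⟨h0, ht, a, bo, hba, hc0, hin, hout⟩)
    · -- round start: Alice plays the centre
      -- unify the two colouring cases
      obtain ⟨bo, hbo, hprop⟩ :
          ∃ bo : Option (Fin 3), (∀ v, v ≠ 0 → col v = bo) ∧
            (col 0 = none ∧ bo = none ∨ ∃ a b : Fin 3, a ≠ b ∧ col 0 = some a ∧ bo = some b) := by
        rcases hcol with hnone | ⟨a, b, hab, hc0, hleaf⟩
        · exact ⟨none, fun v _ => hnone v, Or.inl ⟨hnone 0, rfl⟩⟩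
        · exact ⟨some b, hleaf, Or.inr ⟨a, b, hab, hc0, rfl⟩⟩
      set c := cg (col 0) bo with hc
      have h0mem : (0 : Fin (2*n+1+1)) ∉ availReset done := by rw [hD]; exact Finset.notMem_empty _
      have hgr : GreedyColour (starGraph (2*n+1)) col 0 c := (greedy_center col hbo c).2 rfl
      apply ih 0 h0mem c (by simpa using hgr)
      right
      rw [hD]
      have hsing : insert (0 : Fin (2*n+1+1)) (∅ : Finset (Fin (2*n+1+1))) = {0} := rfl
      have hne : ({0} : Finset (Fin (2*n+1+1))) ≠ univ := by
        intro hEq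
        have := Finset.card_univ (α := Fin (2*n+1+1))
        rw [← hEq] at this
        simp [Fintype.card_fin] at this
      rw [hsing, availReset_eq_self hne]
      refine ⟨Finset.mem_singleton_self 0, by simp, c, bo, (cg_props (col 0) bo).2, ?_, ?_, ?_⟩
      · rw [Function.update_self]
      · intro w hw0 hwD
        exact absurd (Finset.mem_singleton.1 hwD) hw0
      · intro w hw0 _
        rw [Function.update_of_ne hw0]
        exact hbo w hw0
    · -- mid round: Alice plays any remaining leaf
      have hDne : availReset done ≠ univ := availReset_ne_univ done
      obtain ⟨v, hv⟩ : ∃ v, v ∉ availReset done := by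
        by_contra hcon
        push_neg at hcon
        exact hDne (Finset.eq_univ_iff_forall.2 hcon)
      have hv0 : v ≠ 0 := fun h => hv (h ▸ h0)
      set c := cg bo (some a) with hc
      have hgr : GreedyColour (starGraph (2*n+1)) col v c := by
        rw [greedy_leaf col hv0, hout v hv0 hv, hc0]
      apply ih v hv c (by simpa using hgr)
      right
      have hcard : (insert v (availReset done)).card = (availReset done).card + 1 :=
        Finset.card_insert_of_notMem hv
      have heven : (availReset done).card % 2 = 0 := ht.mp rfl
      have huniv : insert v (availReset done) ≠ univ := by
        intro hEq
        have hcu : (insert v (availReset done)).card = 2*n+1+1 := by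
          rw [hEq, Finset.card_univ, Fintype.card_fin]
        omega
      rw [availReset_eq_self huniv]
      refine ⟨Finset.mem_insert_of_mem h0, ?_, a, bo, hba, ?_, ?_, ?_⟩
      · rw [hcard]
        simp only [Bool.false_eq_true, false_iff]
        omega
      · rw [Function.update_of_ne (Ne.symm hv0), hc0]
      · intro w hw0 hwD
        by_cases hwv : w = v
        · subst hwv; rw [Function.update_self]
        · rw [Function.update_of_ne hwv]
          exact hin w hw0 (by
            rcases Finset.mem_insert.1 hwD with h | h
            · exact absurd h hwv
            · exact h)
      · intro w hw0 hwD
        have hwv : w ≠ v := fun h => hwD (by rw [h]; exact Finset.mem_insert_self v _)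
        rw [Function.update_of_ne hwv]
        exact hout w hw0 (fun h => hwD (Finset.mem_insert_of_mem h))

lemma main (n : ℕ) : ¬ BobWins (starGraph (2 * n + 1)) 3 true (fun _ => none) ∅ true := by
  intro hB
  refine key n _ _ _ hB ?_
  left
  have hA : availReset (∅ : Finset (Fin (2*n+1+1))) = ∅ :=
    availReset_eq_self (Ne.symm (Finset.univ_nonempty.ne_empty))
  exact ⟨hA, rfl, Or.inl fun v => rfl⟩

end Stmt14

/-- In the eternal vertex colouring game on `K_{1,2n+1}` with `3` colours where both players
always play the smallest legal colour, Alice wins: `χ_g^{∞3}(K_{1,2n+1}) ≤ 3`. -/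
theorem stmt_14 (n : ℕ) (hn : 2 ≤ n) :
    ¬ BobWins (starGraph (2 * n + 1)) 3 true (fun _ => none) ∅ true ∧
    sInf {k : ℕ | ¬ BobWins (starGraph (2 * n + 1)) k true (fun _ => none) ∅ true} ≤ 3 := by
  refine ⟨Stmt14.main n, Nat.sInf_le ?_⟩
  exact Stmt14.main n
end

section
/- For all integers n ≥ 2, in the eternal vertex colouring game on the star K_{1,2n} played with 3 colours where Bob must always use the smallest legally available colour, Bob has a winning strategy; that is, χ_g^{∞2}(K_{1,2n}) ≥ 4. -/
open Finset

set_option linter.unusedSectionVars false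
set_option linter.unusedVariables false

section Helpers
variable {V : Type*} [Fintype V] [DecidableEq V]

lemma availReset_of_ne {done : Finset V} (h : done ≠ univ) : availReset done = done := if_neg h

lemma availReset_univ : availReset (univ : Finset V) = ∅ := if_pos rfl

lemma availReset_empty : availReset (∅ : Finset V) = ∅ := ite_self _

set_option linter.unusedSectionVars false in
lemma exists_greedy (G : SimpleGraph V) {k : ℕ} (col : V → Option (Fin k)) (v : V)
    (h : ∃ c, LegalColour G col v c) : ∃ c, GreedyColour G col v c := by
  classical
  obtain ⟨c, hc⟩ := h
  set S : Finset (Fin k) := univ.filter (fun c => LegalColour G col v c) with hS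
  have hne : S.Nonempty := ⟨c, by simp [hS, hc]⟩
  refine ⟨S.min' hne, ?_, ?_⟩
  · have := S.min'_mem hne
    simp only [hS, mem_filter] at this
    exact this.2
  · intro c' hlt hc'
    have : S.min' hne ≤ c' := S.min'_le c' (by simp [hS, hc'])
    exact absurd hlt (not_lt.mpr this)

lemma exists_legal_big (G : SimpleGraph V) {k : ℕ} (hk : Fintype.card V < k)
    (col : V → Option (Fin k)) (v : V) : ∃ c, LegalColour G col v c := by
  classical
  by_contra h
  push_neg at h
  have hmem : ∀ c : Fin k, (some c) ∈ univ.image col := by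
    intro c
    have hc : ¬ (col v ≠ some c ∧ ∀ w, G.Adj v w → col w ≠ some c) := h c
    by_cases hcv : col v = some c
    · exact mem_image.mpr ⟨v, mem_univ v, hcv⟩
    · have h2 : ¬ ∀ w, G.Adj v w → col w ≠ some c := fun hall => hc ⟨hcv, hall⟩
      push_neg at h2
      obtain ⟨w, _, hw⟩ := h2
      exact mem_image.mpr ⟨w, mem_univ w, hw⟩
  have hsub : (univ.image (fun c : Fin k => (some c : Option (Fin k)))) ⊆ univ.image col := by
    intro x hx
    obtain ⟨c, _, rfl⟩ := mem_image.mp hx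
    exact hmem c
  have h1 : (univ.image (fun c : Fin k => (some c : Option (Fin k)))).card = k := by
    rw [Finset.card_image_of_injective _ (Option.some_injective _)]
    simp
  have h2 := Finset.card_le_card hsub
  have h3 := Finset.card_image_le (s := (univ : Finset V)) (f := col)
  simp only [Finset.card_univ] at h3
  omega
end Helpers

lemma legal_leaf {m k : ℕ} (col : Fin (m+1) → Option (Fin k)) {v : Fin (m+1)} (hv : v ≠ 0)
    (c : Fin k) :
    LegalColour (starGraph m) col v c ↔ col v ≠ some c ∧ col 0 ≠ some c := by
  constructor
  · rintro ⟨h1, h2⟩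
    exact ⟨h1, h2 0 ⟨hv, Or.inr rfl⟩⟩
  · rintro ⟨h1, h2⟩
    refine ⟨h1, ?_⟩
    rintro w ⟨hne, h0 | h0⟩
    · exact absurd h0 hv
    · subst h0; exact h2

lemma legal_centre {m k : ℕ} (col : Fin (m+1) → Option (Fin k)) (c : Fin k) :
    LegalColour (starGraph m) col 0 c ↔ col 0 ≠ some c ∧ ∀ w, w ≠ 0 → col w ≠ some c := by
  constructor
  · rintro ⟨h1, h2⟩
    exact ⟨h1, fun w hw => h2 w ⟨Ne.symm hw, Or.inl rfl⟩⟩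
  · rintro ⟨h1, h2⟩
    refine ⟨h1, ?_⟩
    rintro w ⟨hne, _⟩
    exact h2 w (Ne.symm hne)

lemma fin3_cover : ∀ a p q c : Fin 3, a ≠ p → a ≠ q → p ≠ q → c = a ∨ c = p ∨ c = q := by decide
lemma fin3_least : ∀ a : Fin 3, ∃ p, p ≠ a ∧ ∀ c, c ≠ a → p ≤ c := by decide
lemma fin3_two_avoid : ∀ (x y : Option (Fin 3)), ∃ c : Fin 3, x ≠ some c ∧ y ≠ some c := by decide
lemma fin3_third : ∀ a r : Fin 3, r ≠ a → ∃ s, s ≠ a ∧ s ≠ r ∧ ∀ c, c ≠ a → c ≠ r → c = s := by decide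
lemma fin2_other : ∀ a : Fin 2, ∃ b, b ≠ a ∧ (∀ c, c ≠ a → c = b) := by decide

lemma lemC (n : ℕ) (hn : 2 ≤ n) (a p q : Fin 3) (hap : a ≠ p) (haq : a ≠ q) (hpq : p ≠ q)
    (w1 w2 : Fin (2*n+1)) (hw10 : w1 ≠ 0) (hw20 : w2 ≠ 0) :
    ∀ (d : ℕ) (col : Fin (2*n+1) → Option (Fin 3)) (done : Finset (Fin (2*n+1))) (turn : Bool),
      (univ \ done).card = d →
      ((turn = true) ↔ Even done.card) →
      (0 : Fin (2*n+1)) ∈ done → done ≠ univ →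
      col 0 = some a → w1 ∈ done → col w1 = some p → w2 ∈ done → col w2 = some q →
      BobWins (starGraph (2*n)) 3 false col done turn := by
  intro d
  induction d using Nat.strong_induction_on with
  | _ d ih =>
  intro col done turn hd hpar h0 hne ha hw1 hp hw2 hq
  have havail : availReset done = done := availReset_of_ne hne
  have hcardu : (univ : Finset (Fin (2*n+1))).card = 2*n+1 := by simp
  have hclt : done.card < 2*n+1 := by
    have := Finset.card_lt_card (lt_of_le_of_ne (subset_univ done) hne)
    omega
  have hdge : 1 ≤ d := by
    rw [Finset.card_sdiff_of_subset (subset_univ done), hcardu] at hd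
    omega
  cases turn with
  | false =>
    have hodd : ¬ Even done.card := fun h => by simpa using hpar.mpr h
    obtain ⟨v, _, hvd⟩ := Finset.exists_of_ssubset (lt_of_le_of_ne (subset_univ done) hne)
    have hv0 : v ≠ 0 := fun h => hvd (h ▸ h0)
    have hvw1 : v ≠ w1 := fun h => hvd (h ▸ hw1)
    have hvw2 : v ≠ w2 := fun h => hvd (h ▸ hw2)
    obtain ⟨c0, hc01, hc02⟩ := fin3_two_avoid (col v) (some a)
    have hleg : ∃ c, LegalColour (starGraph (2*n)) col v c :=
      ⟨c0, (legal_leaf col hv0 c0).mpr ⟨hc01, by rw [ha]; exact hc02⟩⟩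
    obtain ⟨c, hcg⟩ := exists_greedy _ col v hleg
    refine BobWins.bobMove col done v c (by rw [havail]; exact hvd) hcg ?_
    rw [havail]
    have hcard' : (insert v done).card = done.card + 1 := Finset.card_insert_of_notMem hvd
    have hne' : insert v done ≠ univ := by
      intro h
      have h' := congrArg Finset.card h
      rw [hcard', hcardu] at h'
      rw [Nat.even_iff] at hodd
      omega
    refine ih (d-1) (by omega) _ _ _ ?_ ?_ ?_ hne' ?_ ?_ ?_ ?_ ?_
    · rw [Finset.card_sdiff_of_subset (subset_univ _), hcard', hcardu]
      rw [Finset.card_sdiff_of_subset (subset_univ _), hcardu] at hd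
      omega
    · simp [hcard', Nat.even_add_one, hodd]
    · exact mem_insert_of_mem h0
    · rw [Function.update_of_ne (Ne.symm hv0)]; exact ha
    · exact mem_insert_of_mem hw1
    · rw [Function.update_of_ne (Ne.symm hvw1)]; exact hp
    · exact mem_insert_of_mem hw2
    · rw [Function.update_of_ne (Ne.symm hvw2)]; exact hq
  | true =>
    have heven : Even done.card := hpar.mp rfl
    refine BobWins.aliceMove col done ?_
    intro v hv c hc
    rw [havail] at hv
    have hcleg : LegalColour (starGraph (2*n)) col v c := by simpa using hc
    have hv0 : v ≠ 0 := fun h => hv (h ▸ h0)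
    have hvw1 : v ≠ w1 := fun h => hv (h ▸ hw1)
    have hvw2 : v ≠ w2 := fun h => hv (h ▸ hw2)
    rw [havail]
    by_cases hu : insert v done = univ
    · refine BobWins.bobStuck _ _ ⟨0, ?_, ?_⟩
      · rw [hu, availReset_univ]; exact notMem_empty 0
      · intro c'
        rw [legal_centre]
        rintro ⟨hc0, hcl⟩
        rw [Function.update_of_ne (Ne.symm hv0), ha] at hc0
        have h1 := hcl w1 hw10
        rw [Function.update_of_ne (Ne.symm hvw1), hp] at h1
        have h2 := hcl w2 hw20
        rw [Function.update_of_ne (Ne.symm hvw2), hq] at h2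
        rcases fin3_cover a p q c' hap haq hpq with h | h | h
        · exact hc0 (by rw [h])
        · exact h1 (by rw [h])
        · exact h2 (by rw [h])
    · have hcard' : (insert v done).card = done.card + 1 := Finset.card_insert_of_notMem hv
      refine ih (d-1) (by omega) _ _ _ ?_ ?_ ?_ hu ?_ ?_ ?_ ?_ ?_
      · rw [Finset.card_sdiff_of_subset (subset_univ _), hcard', hcardu]
        rw [Finset.card_sdiff_of_subset (subset_univ _), hcardu] at hd
        omega
      · simp [hcard', Nat.even_add_one, heven]
      · exact mem_insert_of_mem h0
      · rw [Function.update_of_ne (Ne.symm hv0)]; exact ha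
      · exact mem_insert_of_mem hw1
      · rw [Function.update_of_ne (Ne.symm hvw1)]; exact hp
      · exact mem_insert_of_mem hw2
      · rw [Function.update_of_ne (Ne.symm hvw2)]; exact hq

lemma lemF (n : ℕ) (hn : 2 ≤ n) (col : Fin (2*n+1) → Option (Fin 3)) (a r : Fin 3)
    (hra : r ≠ a) (ha : col 0 = some a) (hleaf : ∀ w : Fin (2*n+1), w ≠ 0 → col w = some r) :
    BobWins (starGraph (2*n)) 3 false col univ false := by
  obtain ⟨s, hsa, hsr, hscover⟩ := fin3_third a r hra
  have hcardu : (univ : Finset (Fin (2*n+1))).card = 2*n+1 := by simp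
  set l1 : Fin (2*n+1) := ⟨1, by omega⟩ with hl1
  set l2 : Fin (2*n+1) := ⟨2, by omega⟩ with hl2
  set l3 : Fin (2*n+1) := ⟨3, by omega⟩ with hl3
  have hl10 : l1 ≠ 0 := by simp [hl1, Fin.ext_iff]
  have hl20 : l2 ≠ 0 := by simp [hl2, Fin.ext_iff]
  have hl30 : l3 ≠ 0 := by simp [hl3, Fin.ext_iff]
  have hl12 : l1 ≠ l2 := by simp [hl1, hl2, Fin.ext_iff]
  have hl13 : l1 ≠ l3 := by simp [hl1, hl3, Fin.ext_iff]
  have hl23 : l2 ≠ l3 := by simp [hl2, hl3, Fin.ext_iff]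
  have hgreedy : GreedyColour (starGraph (2*n)) col l1 s := by
    constructor
    · rw [legal_leaf col hl10]
      refine ⟨by rw [hleaf l1 hl10]; simp [Ne.symm hsr], by rw [ha]; simp [Ne.symm hsa]⟩
    · intro c' hlt hc'
      rw [legal_leaf col hl10, hleaf l1 hl10, ha] at hc'
      have hc'r : c' ≠ r := fun h => hc'.1 (by rw [h])
      have hc'a : c' ≠ a := fun h => hc'.2 (by rw [h])
      rw [hscover c' hc'a hc'r] at hlt
      exact absurd hlt (lt_irrefl s)
  refine BobWins.bobMove col univ l1 s (by rw [availReset_univ]; exact notMem_empty l1)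
    hgreedy ?_
  rw [availReset_univ]
  refine BobWins.aliceMove _ _ ?_
  intro u hu c hc
  have hins : (insert l1 (∅ : Finset (Fin (2*n+1)))) ≠ univ := by
    intro h
    have h' := congrArg Finset.card h
    simp [hcardu] at h'
    omega
  rw [availReset_of_ne hins] at hu
  simp only [mem_insert, not_or] at hu
  have hul1 : u ≠ l1 := hu.1
  have hcleg : LegalColour (starGraph (2*n)) (Function.update col l1 (some s)) u c := by
    simpa using hc
  rw [availReset_of_ne hins]
  by_cases hu0 : u = 0
  · exfalso
    subst hu0
    rw [legal_centre] at hcleg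
    obtain ⟨h1, h2⟩ := hcleg
    rw [Function.update_of_ne (Ne.symm hl10), ha] at h1
    have h3 := h2 l1 hl10
    rw [Function.update_self] at h3
    have h4 := h2 l2 hl20
    rw [Function.update_of_ne hl12.symm, hleaf l2 hl20] at h4
    rcases fin3_cover a r s c (Ne.symm hra) (Ne.symm hsa) (Ne.symm hsr) with h | h | h
    · exact h1 (by rw [h])
    · exact h4 (by rw [h])
    · exact h3 (by rw [h])
  · refine BobWins.bobStuck _ _ ⟨0, ?_, ?_⟩
    · have hne2 : insert u (insert l1 (∅ : Finset (Fin (2*n+1)))) ≠ univ := by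
        intro h
        have h' := congrArg Finset.card h
        rw [hcardu] at h'
        have : (insert u (insert l1 (∅ : Finset (Fin (2*n+1))))).card ≤ 2 := by
          apply le_trans (Finset.card_insert_le _ _)
          simp
        omega
      rw [availReset_of_ne hne2]
      simp only [mem_insert, not_or]
      exact ⟨Ne.symm hu0, Ne.symm hl10, notMem_empty 0⟩
    · intro c'
      rw [legal_centre]
      rintro ⟨h1, h2⟩
      rw [Function.update_of_ne (Ne.symm hu0), Function.update_of_ne (Ne.symm hl10), ha] at h1
      have h3 := h2 l1 hl10
      rw [Function.update_of_ne (Ne.symm hul1), Function.update_self] at h3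
      -- find a leaf with colour r distinct from u and l1
      have hc_s : c = s := by
        rw [legal_leaf _ hu0] at hcleg
        obtain ⟨g1, g2⟩ := hcleg
        rw [Function.update_of_ne hul1, hleaf u hu0] at g1
        rw [Function.update_of_ne (Ne.symm hl10), ha] at g2
        exact hscover c (fun h => g2 (by rw [h])) (fun h => g1 (by rw [h]))
      by_cases hul2 : u = l2
      · have h4 := h2 l3 hl30
        rw [Function.update_of_ne (by rw [hul2] at *; exact Ne.symm hl23),
          Function.update_of_ne hl13.symm, hleaf l3 hl30] at h4
        rcases fin3_cover a r s c' (Ne.symm hra) (Ne.symm hsa) (Ne.symm hsr) with h | h | h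
        · exact h1 (by rw [h])
        · exact h4 (by rw [h])
        · exact h3 (by rw [h])
      · have h4 := h2 l2 hl20
        rw [Function.update_of_ne (Ne.symm hul2), Function.update_of_ne hl12.symm,
          hleaf l2 hl20] at h4
        rcases fin3_cover a r s c' (Ne.symm hra) (Ne.symm hsa) (Ne.symm hsr) with h | h | h
        · exact h1 (by rw [h])
        · exact h4 (by rw [h])
        · exact h3 (by rw [h])

lemma lemG (n : ℕ) (hn : 2 ≤ n) (a p : Fin 3) (hpa : p ≠ a)
    (hleast : ∀ c : Fin 3, c ≠ a → p ≤ c) :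
    ∀ (d : ℕ) (col : Fin (2*n+1) → Option (Fin 3)) (done : Finset (Fin (2*n+1))) (turn : Bool),
      (univ \ done).card = d →
      ((turn = true) ↔ Even done.card) →
      (0 : Fin (2*n+1)) ∈ done → done ≠ univ →
      col 0 = some a →
      (∀ u, col u ≠ none ↔ u ∈ done) →
      (∀ u ∈ done, u ≠ (0 : Fin (2*n+1)) → col u = some p) →
      BobWins (starGraph (2*n)) 3 false col done turn := by
  intro d
  induction d using Nat.strong_induction_on with
  | _ d ih =>
  intro col done turn hd hpar h0 hne ha hcolored hleaves
  have havail : availReset done = done := availReset_of_ne hne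
  have hcardu : (univ : Finset (Fin (2*n+1))).card = 2*n+1 := by simp
  have hclt : done.card < 2*n+1 := by
    have := Finset.card_lt_card (lt_of_le_of_ne (subset_univ done) hne)
    omega
  have hdge : 1 ≤ d := by
    rw [Finset.card_sdiff_of_subset (subset_univ done), hcardu] at hd
    omega
  cases turn with
  | false =>
    have hodd : ¬ Even done.card := fun h => by simpa using hpar.mpr h
    obtain ⟨v, _, hvd⟩ := Finset.exists_of_ssubset (lt_of_le_of_ne (subset_univ done) hne)
    have hv0 : v ≠ 0 := fun h => hvd (h ▸ h0)
    have hvnone : col v = none := by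
      by_contra h
      exact hvd ((hcolored v).mp h)
    have hgreedy : GreedyColour (starGraph (2*n)) col v p := by
      constructor
      · rw [legal_leaf col hv0]
        exact ⟨by rw [hvnone]; simp, by rw [ha]; simp [Ne.symm hpa]⟩
      · intro c' hlt hc'
        rw [legal_leaf col hv0, ha] at hc'
        have : c' ≠ a := fun h => hc'.2 (by rw [h])
        exact absurd hlt (not_lt.mpr (hleast c' this))
    refine BobWins.bobMove col done v p (by rw [havail]; exact hvd) hgreedy ?_
    rw [havail]
    have hcard' : (insert v done).card = done.card + 1 := Finset.card_insert_of_notMem hvd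
    have hne' : insert v done ≠ univ := by
      intro h
      have h' := congrArg Finset.card h
      rw [hcard', hcardu] at h'
      rw [Nat.even_iff] at hodd
      omega
    refine ih (d-1) (by omega) _ _ _ ?_ ?_ ?_ hne' ?_ ?_ ?_
    · rw [Finset.card_sdiff_of_subset (subset_univ _), hcard', hcardu]
      rw [Finset.card_sdiff_of_subset (subset_univ _), hcardu] at hd
      omega
    · simp [hcard', Nat.even_add_one, hodd]
    · exact mem_insert_of_mem h0
    · rw [Function.update_of_ne (Ne.symm hv0)]; exact ha
    · intro u
      by_cases huv : u = v
      · subst huv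
        simp
      · rw [Function.update_of_ne huv]
        rw [mem_insert]
        constructor
        · intro h; exact Or.inr ((hcolored u).mp h)
        · rintro (h | h)
          · exact absurd h huv
          · exact (hcolored u).mpr h
    · intro u hu hu0
      rcases mem_insert.mp hu with h | h
      · subst h; rw [Function.update_self]
      · rw [Function.update_of_ne (fun hh => hvd (by rw [← hh]; exact h))]
        exact hleaves u h hu0
  | true =>
    have heven : Even done.card := hpar.mp rfl
    refine BobWins.aliceMove col done ?_
    intro v hv c hc
    rw [havail] at hv
    have hcleg : LegalColour (starGraph (2*n)) col v c := by simpa using hc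
    have hv0 : v ≠ 0 := fun h => hv (h ▸ h0)
    have hvnone : col v = none := by
      by_contra h
      exact hv ((hcolored v).mp h)
    have hca : c ≠ a := by
      rw [legal_leaf col hv0, ha] at hcleg
      exact fun h => hcleg.2 (by rw [h])
    rw [havail]
    have hcard' : (insert v done).card = done.card + 1 := Finset.card_insert_of_notMem hv
    by_cases hcp : c = p
    · subst hcp
      by_cases hu : insert v done = univ
      · rw [hu]
        refine lemF n hn _ a c hca ?_ ?_
        · rw [Function.update_of_ne (Ne.symm hv0)]; exact ha
        · intro w hw0
          by_cases hwv : w = v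
          · subst hwv; rw [Function.update_self]
          · rw [Function.update_of_ne hwv]
            have : w ∈ done := by
              have : w ∈ insert v done := hu ▸ mem_univ w
              rcases mem_insert.mp this with h | h
              · exact absurd h hwv
              · exact h
            exact hleaves w this hw0
      · refine ih (d-1) (by omega) _ _ _ ?_ ?_ ?_ hu ?_ ?_ ?_
        · rw [Finset.card_sdiff_of_subset (subset_univ _), hcard', hcardu]
          rw [Finset.card_sdiff_of_subset (subset_univ _), hcardu] at hd
          omega
        · simp [hcard', Nat.even_add_one, heven]
        · exact mem_insert_of_mem h0
        · rw [Function.update_of_ne (Ne.symm hv0)]; exact ha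
        · intro u
          by_cases huv : u = v
          · subst huv; simp
          · rw [Function.update_of_ne huv, mem_insert]
            constructor
            · intro h; exact Or.inr ((hcolored u).mp h)
            · rintro (h | h)
              · exact absurd h huv
              · exact (hcolored u).mpr h
        · intro u hu2 hu0
          rcases mem_insert.mp hu2 with h | h
          · subst h; rw [Function.update_self]
          · rw [Function.update_of_ne (fun hh => hv (by rw [← hh]; exact h))]
            exact hleaves u h hu0
    · -- Alice played the third colour q := c
      have hcge2 : 2 ≤ done.card := by
        have h1 : 1 ≤ done.card := Finset.card_pos.mpr ⟨0, h0⟩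
        rw [Nat.even_iff] at heven
        omega
      obtain ⟨w, hw, hw0⟩ := Finset.exists_mem_ne (show 1 < done.card by omega) (0 : Fin (2*n+1))
      have hwp : col w = some p := hleaves w hw hw0
      have hvw : v ≠ w := fun h => hv (h ▸ hw)
      by_cases hu : insert v done = univ
      · refine BobWins.bobStuck _ _ ⟨0, ?_, ?_⟩
        · rw [hu, availReset_univ]; exact notMem_empty 0
        · intro c'
          rw [legal_centre]
          rintro ⟨h1, h2⟩
          rw [Function.update_of_ne (Ne.symm hv0), ha] at h1
          have h3 := h2 w hw0
          rw [Function.update_of_ne (Ne.symm hvw), hwp] at h3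
          have h4 := h2 v hv0
          rw [Function.update_self] at h4
          rcases fin3_cover a p c c' (Ne.symm hpa) (Ne.symm hca) (Ne.symm hcp) with h | h | h
          · exact h1 (by rw [h])
          · exact h3 (by rw [h])
          · exact h4 (by rw [h])
      · refine lemC n hn a p c (Ne.symm hpa) (Ne.symm hca) (Ne.symm hcp) w v hw0 hv0
          (d-1) _ _ _ ?_ ?_ ?_ hu ?_ ?_ ?_ ?_ ?_
        · rw [Finset.card_sdiff_of_subset (subset_univ _), hcard', hcardu]
          rw [Finset.card_sdiff_of_subset (subset_univ _), hcardu] at hd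
          omega
        · simp [hcard', Nat.even_add_one, heven]
        · exact mem_insert_of_mem h0
        · rw [Function.update_of_ne (Ne.symm hv0)]; exact ha
        · exact mem_insert_of_mem hw
        · rw [Function.update_of_ne (Ne.symm hvw)]; exact hwp
        · exact mem_insert_self v done
        · rw [Function.update_self]

lemma lemH (n : ℕ) (hn : 2 ≤ n) (a p q : Fin 3) (hpa : p ≠ a)
    (hleast : ∀ c : Fin 3, c ≠ a → p ≤ c) (hqa : q ≠ a) (hqp : q ≠ p)
    (v : Fin (2*n+1)) (hv0 : v ≠ 0) (col : Fin (2*n+1) → Option (Fin 3))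
    (ha : col 0 = some a) (hqv : col v = some q)
    (hnone : ∀ u, u ≠ 0 → u ≠ v → col u = none) :
    BobWins (starGraph (2*n)) 3 false col (insert (0 : Fin (2*n+1)) (insert v ∅)) true := by
  have hcardu : (univ : Finset (Fin (2*n+1))).card = 2*n+1 := by simp
  have h0nm : (0 : Fin (2*n+1)) ∉ insert v (∅ : Finset (Fin (2*n+1))) := by
    simp [Ne.symm hv0]
  have hcard2 : (insert (0 : Fin (2*n+1)) (insert v (∅ : Finset (Fin (2*n+1))))).card = 2 := by
    rw [Finset.card_insert_of_notMem h0nm]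
    simp
  have hne2 : insert (0 : Fin (2*n+1)) (insert v (∅ : Finset (Fin (2*n+1)))) ≠ univ := by
    intro h
    have h' := congrArg Finset.card h
    rw [hcard2, hcardu] at h'
    omega
  refine BobWins.aliceMove _ _ ?_
  intro u hu c hc
  rw [availReset_of_ne hne2] at hu ⊢
  simp only [mem_insert, not_or] at hu
  obtain ⟨hu0, huv, -⟩ := hu
  have hunone : col u = none := hnone u hu0 huv
  have hcleg : LegalColour (starGraph (2*n)) col u c := by simpa using hc
  have hca : c ≠ a := by
    rw [legal_leaf col hu0, ha] at hcleg
    exact fun h => hcleg.2 (by rw [h])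
  have hcard3 : (insert u (insert (0 : Fin (2*n+1)) (insert v (∅ : Finset (Fin (2*n+1)))))).card = 3 := by
    rw [Finset.card_insert_of_notMem (by simp [hu0, huv]), hcard2]
  have hne3 : insert u (insert (0 : Fin (2*n+1)) (insert v (∅ : Finset (Fin (2*n+1))))) ≠ univ := by
    intro h
    have h' := congrArg Finset.card h
    rw [hcard3, hcardu] at h'
    omega
  by_cases hcp : c = p
  · subst hcp
    refine lemC n hn a c q (Ne.symm hca) (Ne.symm hqa) (Ne.symm hqp) u v hu0 hv0
      _ _ _ _ rfl ?_ ?_ hne3 ?_ ?_ ?_ ?_ ?_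
    · rw [hcard3]; decide
    · exact mem_insert_of_mem (mem_insert_self _ _)
    · rw [Function.update_of_ne (Ne.symm hu0)]; exact ha
    · exact mem_insert_self _ _
    · rw [Function.update_self]
    · exact mem_insert_of_mem (mem_insert_of_mem (mem_insert_self _ _))
    · rw [Function.update_of_ne (Ne.symm huv)]; exact hqv
  · -- Bob picks a fresh leaf and colours it p
    obtain ⟨w, _, hwd⟩ :=
      Finset.exists_of_ssubset (lt_of_le_of_ne (subset_univ _) hne3)
    simp only [mem_insert, not_or] at hwd
    obtain ⟨hwu, hw0, hwv, -⟩ := hwd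
    have hwnone : Function.update col u (some c) w = none := by
      rw [Function.update_of_ne hwu]
      exact hnone w hw0 hwv
    have hgreedy : GreedyColour (starGraph (2*n)) (Function.update col u (some c)) w p := by
      constructor
      · rw [legal_leaf _ hw0]
        refine ⟨by rw [hwnone]; simp, ?_⟩
        rw [Function.update_of_ne (Ne.symm hu0), ha]
        simp [Ne.symm hpa]
      · intro c' hlt hc'
        rw [legal_leaf _ hw0, Function.update_of_ne (Ne.symm hu0), ha] at hc'
        have : c' ≠ a := fun h => hc'.2 (by rw [h])
        exact absurd hlt (not_lt.mpr (hleast c' this))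
    refine BobWins.bobMove _ _ w p ?_ hgreedy ?_
    · rw [availReset_of_ne hne3]
      simp [hwu, hw0, hwv]
    · rw [availReset_of_ne hne3]
      have hcard4 : (insert w (insert u (insert (0 : Fin (2*n+1)) (insert v (∅ : Finset (Fin (2*n+1))))))).card = 4 := by
        rw [Finset.card_insert_of_notMem (by simp [hwu, hw0, hwv]), hcard3]
      have hne4 : insert w (insert u (insert (0 : Fin (2*n+1)) (insert v (∅ : Finset (Fin (2*n+1)))))) ≠ univ := by
        intro h
        have h' := congrArg Finset.card h
        rw [hcard4, hcardu] at h'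
        omega
      refine lemC n hn a p c (Ne.symm hpa) (Ne.symm hca) (fun h => hcp h.symm) w u hw0 hu0
        _ _ _ _ rfl ?_ ?_ hne4 ?_ ?_ ?_ ?_ ?_
      · rw [hcard4]; decide
      · exact mem_insert_of_mem (mem_insert_of_mem (mem_insert_self _ _))
      · rw [Function.update_of_ne (Ne.symm hw0), Function.update_of_ne (Ne.symm hu0)]; exact ha
      · exact mem_insert_self _ _
      · rw [Function.update_self]
      · exact mem_insert_of_mem (mem_insert_self _ _)
      · rw [Function.update_of_ne (Ne.symm hwu), Function.update_self]

lemma bob3 (n : ℕ) (hn : 2 ≤ n) :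
    BobWins (starGraph (2*n)) 3 false (fun _ => none) ∅ true := by
  have hcardu : (univ : Finset (Fin (2*n+1))).card = 2*n+1 := by simp
  refine BobWins.aliceMove _ _ ?_
  intro v hv c hc
  rw [availReset_empty]
  by_cases hv0 : v = 0
  · subst hv0
    obtain ⟨p, hpa, hleast⟩ := fin3_least c
    have hcard1 : (insert (0 : Fin (2*n+1)) (∅ : Finset (Fin (2*n+1)))).card = 1 := by simp
    refine lemG n hn c p hpa hleast _ _ _ _ rfl ?_ (mem_insert_self _ _) ?_ ?_ ?_ ?_
    · rw [hcard1]; decide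
    · intro h
      have h' := congrArg Finset.card h
      rw [hcard1, hcardu] at h'
      omega
    · rw [Function.update_self]
    · intro u
      by_cases hu0 : u = 0
      · subst hu0; simp
      · rw [Function.update_of_ne hu0]
        simp [hu0]
    · intro u hu hu0
      rcases mem_insert.mp hu with h | h
      · exact absurd h hu0
      · exact absurd h (notMem_empty u)
  · -- Alice coloured a leaf; Bob colours the centre greedily
    have hne1 : insert v (∅ : Finset (Fin (2*n+1))) ≠ univ := by
      intro h
      have h' := congrArg Finset.card h
      simp [hcardu] at h'
      omega
    set a : Fin 3 := if c = 0 then 1 else 0 with hadef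
    have hac : a ≠ c := by
      by_cases hc0 : c = 0
      · subst hc0; simp [hadef]
      · rw [hadef, if_neg hc0]; exact Ne.symm hc0
    set col1 := Function.update (fun _ : Fin (2*n+1) => none) v (some c) with hcol1
    have hcol1v : col1 v = some c := Function.update_self _ _ _
    have hcol1other : ∀ u, u ≠ v → col1 u = none := by
      intro u huv; rw [hcol1, Function.update_of_ne huv]
    have hgreedy : GreedyColour (starGraph (2*n)) col1 0 a := by
      constructor
      · rw [legal_centre]
        refine ⟨by rw [hcol1other 0 (Ne.symm hv0)]; simp, ?_⟩
        intro w hw0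
        by_cases hwv : w = v
        · subst hwv; rw [hcol1v]; simp [Ne.symm hac]
        · rw [hcol1other w hwv]; simp
      · intro c' hlt hc'
        rw [legal_centre] at hc'
        have hc'c : c' ≠ c := fun h => hc'.2 v hv0 (by rw [hcol1v, h])
        by_cases hc0 : c = 0
        · have ha1 : a = 1 := by simp [hadef, hc0]
          rw [ha1, Fin.lt_def] at hlt
          have : c' = 0 := by
            apply Fin.ext
            simp at hlt; simp [hlt]
          rw [hc0] at hc'c
          exact hc'c this
        · have ha0 : a = 0 := by rw [hadef, if_neg hc0]
          rw [ha0, Fin.lt_def] at hlt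
          simp at hlt
    refine BobWins.bobMove _ _ 0 a ?_ hgreedy ?_
    · rw [availReset_of_ne hne1]; simp [Ne.symm hv0]
    · rw [availReset_of_ne hne1]
      have hcol2_0 : Function.update col1 0 (some a) 0 = some a := Function.update_self _ _ _
      have hcol2_v : Function.update col1 0 (some a) v = some c := by
        rw [Function.update_of_ne hv0]; exact hcol1v
      have hnone2 : ∀ u, u ≠ 0 → u ≠ v → Function.update col1 0 (some a) u = none := by
        intro u hu0 huv
        rw [Function.update_of_ne hu0]
        exact hcol1other u huv
      have h0nm : (0 : Fin (2*n+1)) ∉ insert v (∅ : Finset (Fin (2*n+1))) := by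
        simp [Ne.symm hv0]
      have hcard2 : (insert (0 : Fin (2*n+1)) (insert v (∅ : Finset (Fin (2*n+1))))).card = 2 := by
        rw [Finset.card_insert_of_notMem h0nm]; simp
      have hne2 : insert (0 : Fin (2*n+1)) (insert v (∅ : Finset (Fin (2*n+1)))) ≠ univ := by
        intro h
        have h' := congrArg Finset.card h
        rw [hcard2, hcardu] at h'
        omega
      have hGentry : ∀ p' : Fin 3, p' ≠ a → (∀ c'' : Fin 3, c'' ≠ a → p' ≤ c'') → c = p' →
          BobWins (starGraph (2*n)) 3 false (Function.update col1 0 (some a))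
            (insert (0 : Fin (2*n+1)) (insert v ∅)) true := by
        intro p' hp'a hp'least hcp'
        refine lemG n hn a p' hp'a hp'least _ _ _ _ rfl ?_ (mem_insert_self _ _) hne2
          hcol2_0 ?_ ?_
        · rw [hcard2]; decide
        · intro u
          by_cases hu0 : u = 0
          · subst hu0; simp [hcol2_0]
          · by_cases huv : u = v
            · subst huv; simp only [hcol2_v]; simp [hu0]
            · rw [hnone2 u hu0 huv]; simp [hu0, huv]
        · intro u hu hu0
          rcases mem_insert.mp hu with h | h
          · exact absurd h hu0
          · rcases mem_insert.mp h with h' | h'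
            · subst h'; rw [hcol2_v, hcp']
            · exact absurd h' (notMem_empty u)
      by_cases hc0 : c = 0
      · exact hGentry 0 (by rw [hadef, if_pos hc0]; decide) (by rw [hadef, if_pos hc0]; decide)
          hc0
      · by_cases hc1 : c = 1
        · exact hGentry 1 (by rw [hadef, if_neg hc0]; decide) (by rw [hadef, if_neg hc0]; decide)
            hc1
        · have hc2 : c = 2 := by
            rcases fin3_cover 0 1 2 c (by decide) (by decide) (by decide) with h | h | h
            · exact absurd h hc0
            · exact absurd h hc1
            · exact h
          have ha0 : a = 0 := by rw [hadef, if_neg hc0]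
          refine lemH n hn a 1 2 (by rw [ha0]; decide) (by rw [ha0]; decide)
            (by rw [ha0]; decide) (by decide) v hv0 _ hcol2_0 (by rw [hcol2_v, hc2]) hnone2

lemma fin2_unique : ∀ a b c : Fin 2, b ≠ a → c ≠ a → c = b := by decide

lemma lemG2 (n : ℕ) (hn : 2 ≤ n) (a b : Fin 2) (hba : b ≠ a) :
    ∀ (d : ℕ) (col : Fin (2*n+1) → Option (Fin 2)) (done : Finset (Fin (2*n+1))) (turn : Bool),
      (univ \ done).card = d →
      ((turn = true) ↔ Even done.card) →
      (0 : Fin (2*n+1)) ∈ done → done ≠ univ →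
      col 0 = some a →
      (∀ u, col u ≠ none ↔ u ∈ done) →
      (∀ u ∈ done, u ≠ (0 : Fin (2*n+1)) → col u = some b) →
      BobWins (starGraph (2*n)) 2 false col done turn := by
  intro d
  induction d using Nat.strong_induction_on with
  | _ d ih =>
  intro col done turn hd hpar h0 hne ha hcolored hleaves
  have havail : availReset done = done := availReset_of_ne hne
  have hcardu : (univ : Finset (Fin (2*n+1))).card = 2*n+1 := by simp
  have hclt : done.card < 2*n+1 := by
    have := Finset.card_lt_card (lt_of_le_of_ne (subset_univ done) hne)
    omega
  have hdge : 1 ≤ d := by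
    rw [Finset.card_sdiff_of_subset (subset_univ done), hcardu] at hd
    omega
  cases turn with
  | false =>
    have hodd : ¬ Even done.card := fun h => by simpa using hpar.mpr h
    obtain ⟨v, _, hvd⟩ := Finset.exists_of_ssubset (lt_of_le_of_ne (subset_univ done) hne)
    have hv0 : v ≠ 0 := fun h => hvd (h ▸ h0)
    have hvnone : col v = none := by
      by_contra h
      exact hvd ((hcolored v).mp h)
    have hgreedy : GreedyColour (starGraph (2*n)) col v b := by
      constructor
      · rw [legal_leaf col hv0]
        exact ⟨by rw [hvnone]; simp, by rw [ha]; simp [Ne.symm hba]⟩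
      · intro c' hlt hc'
        rw [legal_leaf col hv0, ha] at hc'
        have : c' ≠ a := fun h => hc'.2 (by rw [h])
        rw [fin2_unique a b c' hba this] at hlt
        exact absurd hlt (lt_irrefl b)
    refine BobWins.bobMove col done v b (by rw [havail]; exact hvd) hgreedy ?_
    rw [havail]
    have hcard' : (insert v done).card = done.card + 1 := Finset.card_insert_of_notMem hvd
    have hne' : insert v done ≠ univ := by
      intro h
      have h' := congrArg Finset.card h
      rw [hcard', hcardu] at h'
      rw [Nat.even_iff] at hodd
      omega
    refine ih (d-1) (by omega) _ _ _ ?_ ?_ ?_ hne' ?_ ?_ ?_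
    · rw [Finset.card_sdiff_of_subset (subset_univ _), hcard', hcardu]
      rw [Finset.card_sdiff_of_subset (subset_univ _), hcardu] at hd
      omega
    · simp [hcard', Nat.even_add_one, hodd]
    · exact mem_insert_of_mem h0
    · rw [Function.update_of_ne (Ne.symm hv0)]; exact ha
    · intro u
      by_cases huv : u = v
      · subst huv; simp
      · rw [Function.update_of_ne huv, mem_insert]
        constructor
        · intro h; exact Or.inr ((hcolored u).mp h)
        · rintro (h | h)
          · exact absurd h huv
          · exact (hcolored u).mpr h
    · intro u hu hu0
      rcases mem_insert.mp hu with h | h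
      · subst h; rw [Function.update_self]
      · rw [Function.update_of_ne (fun hh => hvd (by rw [← hh]; exact h))]
        exact hleaves u h hu0
  | true =>
    have heven : Even done.card := hpar.mp rfl
    refine BobWins.aliceMove col done ?_
    intro v hv c hc
    rw [havail] at hv
    have hcleg : LegalColour (starGraph (2*n)) col v c := by simpa using hc
    have hv0 : v ≠ 0 := fun h => hv (h ▸ h0)
    have hca : c ≠ a := by
      rw [legal_leaf col hv0, ha] at hcleg
      exact fun h => hcleg.2 (by rw [h])
    have hcb : c = b := fin2_unique a b c hba hca
    rw [havail]
    have hcard' : (insert v done).card = done.card + 1 := Finset.card_insert_of_notMem hv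
    by_cases hu : insert v done = univ
    · set l1 : Fin (2*n+1) := ⟨1, by omega⟩ with hl1
      have hl10 : l1 ≠ 0 := by simp [hl1, Fin.ext_iff]
      refine BobWins.bobStuck _ _ ⟨l1, ?_, ?_⟩
      · rw [hu, availReset_univ]; exact notMem_empty l1
      · intro c'
        rw [legal_leaf _ hl10]
        rintro ⟨h1, h2⟩
        have hleafb : Function.update col v (some c) l1 = some b := by
          by_cases hlv : l1 = v
          · rw [hlv, Function.update_self, hcb]
          · rw [Function.update_of_ne hlv]
            have : l1 ∈ done := by
              have : l1 ∈ insert v done := hu ▸ mem_univ l1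
              rcases mem_insert.mp this with h | h
              · exact absurd h hlv
              · exact h
            exact hleaves l1 this hl10
        rw [hleafb] at h1
        rw [Function.update_of_ne (Ne.symm hv0), ha] at h2
        have hc'a : c' ≠ a := fun h => h2 (by rw [h])
        have hc'b : c' = b := fin2_unique a b c' hba hc'a
        exact h1 (by rw [hc'b])
    · refine ih (d-1) (by omega) _ _ _ ?_ ?_ ?_ hu ?_ ?_ ?_
      · rw [Finset.card_sdiff_of_subset (subset_univ _), hcard', hcardu]
        rw [Finset.card_sdiff_of_subset (subset_univ _), hcardu] at hd
        omega
      · simp [hcard', Nat.even_add_one, heven]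
      · exact mem_insert_of_mem h0
      · rw [Function.update_of_ne (Ne.symm hv0)]; exact ha
      · intro u
        by_cases huv : u = v
        · subst huv; simp
        · rw [Function.update_of_ne huv, mem_insert]
          constructor
          · intro h; exact Or.inr ((hcolored u).mp h)
          · rintro (h | h)
            · exact absurd h huv
            · exact (hcolored u).mpr h
      · intro u hu2 hu0
        rcases mem_insert.mp hu2 with h | h
        · subst h; rw [Function.update_self, hcb]
        · rw [Function.update_of_ne (fun hh => hv (by rw [← hh]; exact h))]
          exact hleaves u h hu0


lemma bob2 (n : ℕ) (hn : 2 ≤ n) :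
    BobWins (starGraph (2*n)) 2 false (fun _ => none) ∅ true := by
  have hcardu : (univ : Finset (Fin (2*n+1))).card = 2*n+1 := by simp
  refine BobWins.aliceMove _ _ ?_
  intro v hv c hc
  rw [availReset_empty]
  by_cases hv0 : v = 0
  · subst hv0
    obtain ⟨b, hba, -⟩ := fin2_other c
    have hcard1 : (insert (0 : Fin (2*n+1)) (∅ : Finset (Fin (2*n+1)))).card = 1 := by simp
    refine lemG2 n hn c b hba _ _ _ _ rfl ?_ (mem_insert_self _ _) ?_ ?_ ?_ ?_
    · rw [hcard1]; decide
    · intro h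
      have h' := congrArg Finset.card h
      rw [hcard1, hcardu] at h'
      omega
    · rw [Function.update_self]
    · intro u
      by_cases hu0 : u = 0
      · subst hu0; simp
      · rw [Function.update_of_ne hu0]
        simp [hu0]
    · intro u hu hu0
      rcases mem_insert.mp hu with h | h
      · exact absurd h hu0
      · exact absurd h (notMem_empty u)
  · have hne1 : insert v (∅ : Finset (Fin (2*n+1))) ≠ univ := by
      intro h
      have h' := congrArg Finset.card h
      simp [hcardu] at h'
      omega
    obtain ⟨a, hac, huniq⟩ := fin2_other c
    set col1 := Function.update (fun _ : Fin (2*n+1) => none) v (some c) with hcol1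
    have hcol1v : col1 v = some c := Function.update_self _ _ _
    have hcol1other : ∀ u, u ≠ v → col1 u = none := by
      intro u huv; rw [hcol1, Function.update_of_ne huv]
    have hgreedy : GreedyColour (starGraph (2*n)) col1 0 a := by
      constructor
      · rw [legal_centre]
        refine ⟨by rw [hcol1other 0 (Ne.symm hv0)]; simp, ?_⟩
        intro w hw0
        by_cases hwv : w = v
        · subst hwv; rw [hcol1v]; simp [Ne.symm hac]
        · rw [hcol1other w hwv]; simp
      · intro c' hlt hc'
        rw [legal_centre] at hc'
        have hc'c : c' ≠ c := fun h => hc'.2 v hv0 (by rw [hcol1v, h])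
        rw [huniq c' hc'c] at hlt
        exact absurd hlt (lt_irrefl a)
    refine BobWins.bobMove _ _ 0 a ?_ hgreedy ?_
    · rw [availReset_of_ne hne1]; simp [Ne.symm hv0]
    · rw [availReset_of_ne hne1]
      have hcol2_0 : Function.update col1 0 (some a) 0 = some a := Function.update_self _ _ _
      have hcol2_v : Function.update col1 0 (some a) v = some c := by
        rw [Function.update_of_ne hv0]; exact hcol1v
      have h0nm : (0 : Fin (2*n+1)) ∉ insert v (∅ : Finset (Fin (2*n+1))) := by
        simp [Ne.symm hv0]
      have hcard2 : (insert (0 : Fin (2*n+1)) (insert v (∅ : Finset (Fin (2*n+1))))).card = 2 := by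
        rw [Finset.card_insert_of_notMem h0nm]; simp
      refine lemG2 n hn a c (fun h => hac h.symm) _ _ _ _ rfl ?_ (mem_insert_self _ _) ?_
        hcol2_0 ?_ ?_
      · rw [hcard2]; decide
      · intro h
        have h' := congrArg Finset.card h
        rw [hcard2, hcardu] at h'
        omega
      · intro u
        by_cases hu0 : u = 0
        · subst hu0; simp only [hcol2_0]; simp
        · by_cases huv : u = v
          · subst huv; simp only [hcol2_v]; simp [hu0]
          · rw [Function.update_of_ne hu0, hcol1other u huv]
            simp [hu0, huv]
      · intro u hu hu0
        rcases mem_insert.mp hu with h | h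
        · exact absurd h hu0
        · rcases mem_insert.mp h with h' | h'
          · subst h'; exact hcol2_v
          · exact absurd h' (notMem_empty u)

lemma bob1 (n : ℕ) (hn : 2 ≤ n) :
    BobWins (starGraph (2*n)) 1 false (fun _ => none) ∅ true := by
  have hcardu : (univ : Finset (Fin (2*n+1))).card = 2*n+1 := by simp
  refine BobWins.aliceMove _ _ ?_
  intro v hv c hc
  rw [availReset_empty]
  have hne1 : insert v (∅ : Finset (Fin (2*n+1))) ≠ univ := by
    intro h
    have h' := congrArg Finset.card h
    simp [hcardu] at h'
    omega
  have hcc : ∀ c' : Fin 1, c' = c := by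
    intro c'
    apply Fin.ext
    omega
  by_cases hv0 : v = 0
  · subst hv0
    set l1 : Fin (2*n+1) := ⟨1, by omega⟩ with hl1
    have hl10 : l1 ≠ 0 := by simp [hl1, Fin.ext_iff]
    refine BobWins.bobStuck _ _ ⟨l1, ?_, ?_⟩
    · rw [availReset_of_ne hne1]
      simp [hl10]
    · intro c'
      rw [legal_leaf _ hl10]
      rintro ⟨-, h2⟩
      exact h2 (by rw [Function.update_self, hcc c'])
  · refine BobWins.bobStuck _ _ ⟨0, ?_, ?_⟩
    · rw [availReset_of_ne hne1]
      simp [Ne.symm hv0]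
    · intro c'
      rw [legal_centre]
      rintro ⟨-, h2⟩
      exact h2 v hv0 (by rw [Function.update_self, hcc c'])

lemma bob0 (n : ℕ) :
    BobWins (starGraph (2*n)) 0 false (fun _ => none) ∅ true := by
  refine BobWins.aliceMove _ _ ?_
  intro v hv c hc
  exact c.elim0

lemma alice_survives (n : ℕ) :
    ∀ col done turn, ¬ BobWins (starGraph (2*n)) (2*n+2) false col done turn := by
  have hcard : Fintype.card (Fin (2*n+1)) < 2*n+2 := by simp
  intro col done turn h
  induction h with
  | bobStuck col done hex =>
      obtain ⟨v, hv, hall⟩ := hex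
      obtain ⟨c, hc⟩ := exists_legal_big _ hcard col v
      exact hall c hc
  | bobMove col done v c hv hc h ih => exact ih
  | aliceMove col done h ih =>
      have hne : availReset done ≠ univ := by
        unfold availReset
        split
        · exact fun h' => Finset.univ_nonempty.ne_empty h'.symm
        · assumption
      obtain ⟨v, _, hv⟩ := Finset.exists_of_ssubset (lt_of_le_of_ne (subset_univ _) hne)
      obtain ⟨c, hc⟩ := exists_legal_big _ hcard col v
      exact ih v hv c (by simpa using hc)

/-- In the eternal vertex colouring game on `K_{1,2n}` with `3` colours where Bob always
plays the smallest legal colour (Alice unconstrained), Bob wins: `χ_g^{∞2}(K_{1,2n}) ≥ 4`. -/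
theorem stmt_15 (n : ℕ) (hn : 2 ≤ n) :
    BobWins (starGraph (2 * n)) 3 false (fun _ => none) ∅ true ∧
    4 ≤ sInf {k : ℕ | ¬ BobWins (starGraph (2 * n)) k false (fun _ => none) ∅ true} := by
  refine ⟨bob3 n hn, ?_⟩
  have hmem : (2*n+2) ∈ {k : ℕ | ¬ BobWins (starGraph (2 * n)) k false (fun _ => none) ∅ true} :=
    alice_survives n _ _ _
  refine le_csInf ⟨2*n+2, hmem⟩ ?_
  intro k hk
  simp only [Set.mem_setOf_eq] at hk
  by_contra hlt
  push_neg at hlt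
  interval_cases k
  · exact hk (bob0 n)
  · exact hk (bob1 n hn)
  · exact hk (bob2 n hn)
  · exact hk (bob3 n hn)
end

section
/- There exist graphs G and H with H an induced subgraph of G such that χ_g^{∞2}(G) < χ_g^{∞2}(H), and likewise graphs G' and H' with H' an induced subgraph of G' such that χ_g^{∞3}(G') < χ_g^{∞3}(H'). In particular G = K_{1,2n+1} and H = K_{1,2n} witness both (for n ≥ 2). -/
open Finset

/-- `χ_g^{∞2}` (for `aliceGreedy = false`) resp. `χ_g^{∞3}` (for `aliceGreedy = true`):
the least number of colours with which Alice wins the eternal vertex colouring game where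
Bob (resp. both players) must always play the smallest legal colour. -/
noncomputable def eternalChiGreedy {V : Type*} [Fintype V] [DecidableEq V]
    (G : SimpleGraph V) (aliceGreedy : Bool) : ℕ :=
  sInf {k : ℕ | ¬ BobWins G k aliceGreedy (fun _ => none) ∅ true}


namespace StarProof

instance {m : ℕ} : DecidableRel (starGraph m).Adj :=
  fun v w => inferInstanceAs (Decidable (v ≠ w ∧ (v = 0 ∨ w = 0)))

variable {m k : ℕ}

lemma legal_leaf {col : Fin (m+1) → Option (Fin k)} {v : Fin (m+1)} (hv : v ≠ 0) {c : Fin k} :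
    LegalColour (starGraph m) col v c ↔ col v ≠ some c ∧ col 0 ≠ some c := by
  constructor
  · rintro ⟨h1, h2⟩
    exact ⟨h1, h2 0 ⟨hv, Or.inr rfl⟩⟩
  · rintro ⟨h1, h2⟩
    refine ⟨h1, ?_⟩
    rintro w ⟨hne, h0 | h0⟩
    · exact absurd h0 hv
    · subst h0; exact h2

lemma legal_centre {col : Fin (m+1) → Option (Fin k)} {c : Fin k} :
    LegalColour (starGraph m) col 0 c ↔ col 0 ≠ some c ∧ ∀ w, w ≠ 0 → col w ≠ some c := by
  constructor
  · rintro ⟨h1, h2⟩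
    exact ⟨h1, fun w hw => h2 w ⟨Ne.symm hw, Or.inl rfl⟩⟩
  · rintro ⟨h1, h2⟩
    refine ⟨h1, ?_⟩
    rintro w ⟨hne, h0 | h0⟩
    · exact h2 w (by rw [h0] at hne; exact fun h => hne h.symm)
    · subst h0; exact h1

lemma greedy_unique {G : SimpleGraph (Fin (m+1))} {col : Fin (m+1) → Option (Fin k)}
    {v : Fin (m+1)} {c c' : Fin k} (h : GreedyColour G col v c) (h' : GreedyColour G col v c') :
    c = c' := by
  rcases lt_trichotomy c c' with hlt | he | hlt
  · exact absurd h.1 (h'.2 c hlt)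
  · exact he
  · exact absurd h'.1 (h.2 c' hlt)

/-- greedy predicate for a leaf, relative to current own colour `o` and centre colour `δ`. -/
def G2 (o : Option (Fin k)) (δ x : Fin k) : Prop :=
  (o ≠ some x ∧ x ≠ δ) ∧ ∀ y, y < x → o = some y ∨ y = δ

instance {k : ℕ} (o : Option (Fin k)) (δ x : Fin k) : Decidable (G2 o δ x) := by
  unfold G2; infer_instance

lemma G2_unique {o : Option (Fin k)} {δ x y : Fin k} (h : G2 o δ x) (h' : G2 o δ y) : x = y := by
  rcases lt_trichotomy x y with hlt | he | hlt
  · rcases h'.2 x hlt with hc | hc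
    · exact absurd hc h.1.1
    · exact absurd hc h.1.2
  · exact he
  · rcases h.2 y hlt with hc | hc
    · exact absurd hc h'.1.1
    · exact absurd hc h'.1.2

lemma greedy_leaf_iff {col : Fin (m+1) → Option (Fin k)} {v : Fin (m+1)} (hv : v ≠ 0)
    {δ : Fin k} (h0 : col 0 = some δ) {c : Fin k} :
    GreedyColour (starGraph m) col v c ↔ G2 (col v) δ c := by
  unfold GreedyColour G2
  constructor
  · rintro ⟨hl, hmin⟩
    rw [legal_leaf hv] at hl
    refine ⟨⟨hl.1, ?_⟩, ?_⟩
    · intro he; apply hl.2; rw [h0, he]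
    · intro y hy
      have := hmin y hy
      rw [legal_leaf hv] at this
      by_cases h1 : col v = some y
      · exact Or.inl h1
      · refine Or.inr ?_
        by_contra h2
        exact this ⟨h1, by rw [h0]; exact fun he => h2 (Option.some_injective _ he).symm⟩
  · rintro ⟨⟨h1, h2⟩, hmin⟩
    constructor
    · rw [legal_leaf hv]
      exact ⟨h1, by rw [h0]; exact fun he => h2 (Option.some_injective _ he).symm⟩
    · intro y hy hl
      rw [legal_leaf hv] at hl
      rcases hmin y hy with hc | hc
      · exact hl.1 hc
      · subst hc; exact hl.2 h0

lemma greedy_centre_iff {col : Fin (m+1) → Option (Fin k)} {δ : Fin k}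
    {p : Fin (m+1) → Fin k} (h0 : col 0 = some δ)
    (hp : ∀ v, v ≠ 0 → col v = some (p v)) {c : Fin k} :
    GreedyColour (starGraph m) col 0 c ↔
      (c ≠ δ ∧ ∀ v, v ≠ 0 → p v ≠ c) ∧ ∀ y, y < c → y = δ ∨ ∃ v, v ≠ 0 ∧ p v = y := by
  unfold GreedyColour
  constructor
  · rintro ⟨hl, hmin⟩
    rw [legal_centre] at hl
    refine ⟨⟨fun he => hl.1 (by rw [h0, he]), fun v hv he => hl.2 v hv (by rw [hp v hv, he])⟩, ?_⟩
    · intro y hy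
      have hnl := hmin y hy
      rw [legal_centre] at hnl
      by_cases h1 : y = δ
      · exact Or.inl h1
      · refine Or.inr ?_
        by_contra h2
        push_neg at h2
        apply hnl
        refine ⟨by rw [h0]; exact fun he => h1 (Option.some_injective _ he).symm, fun w hw => ?_⟩
        rw [hp w hw]
        exact fun he => h2 w hw (Option.some_injective _ he)
  · rintro ⟨⟨h1, h2⟩, hmin⟩
    constructor
    · rw [legal_centre]
      refine ⟨by rw [h0]; exact fun he => h1 (Option.some_injective _ he).symm, fun w hw => ?_⟩
      rw [hp w hw]
      exact fun he => h2 w hw (Option.some_injective _ he)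
    · intro y hy hl
      rw [legal_centre] at hl
      rcases hmin y hy with hc | hc
      · subst hc; exact hl.1 h0
      · obtain ⟨v, hv, he⟩ := hc
        exact hl.2 v hv (by rw [hp v hv, he])

lemma exists_greedy {G : SimpleGraph (Fin (m+1))} [DecidableRel G.Adj]
    {col : Fin (m+1) → Option (Fin k)} {v : Fin (m+1)}
    (h : ∃ c, LegalColour G col v c) : ∃ c, GreedyColour G col v c := by
  classical
  obtain ⟨c, hc⟩ := h
  let S : Finset (Fin k) := Finset.univ.filter (fun c => LegalColour G col v c)
  have hne : S.Nonempty := ⟨c, by simp [S, hc]⟩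
  refine ⟨S.min' hne, ?_, ?_⟩
  · have := S.min'_mem hne
    simp [S] at this
    exact this
  · intro c' hc' hl
    have : S.min' hne ≤ c' := S.min'_le c' (by simp [S, hl])
    exact absurd hc' (not_lt.mpr this)

lemma exists_not_mem_of_card_lt {s : Finset (Fin (m+1))} (h : s.card < m + 1) :
    ∃ v, v ∉ s := by
  by_contra h'
  push_neg at h'
  have hsub : (Finset.univ : Finset (Fin (m+1))) ⊆ s := fun a _ => h' a
  have := Finset.card_le_card hsub
  simp only [Finset.card_univ, Fintype.card_fin] at this
  omega

lemma exists_leaf (hm : 1 ≤ m) : ∃ v : Fin (m+1), v ≠ 0 := by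
  refine ⟨⟨1, by omega⟩, ?_⟩
  intro h
  have := congrArg Fin.val h
  simp at this

lemma exists_leaf2 (hm : 2 ≤ m) (a : Fin (m+1)) : ∃ v : Fin (m+1), v ≠ 0 ∧ v ≠ a := by
  obtain ⟨v, hv⟩ := exists_not_mem_of_card_lt (s := {0, a})
    (lt_of_le_of_lt (Finset.card_insert_le _ _) (by simp; omega))
  simp only [Finset.mem_insert, Finset.mem_singleton, not_or] at hv
  exact ⟨v, hv.1, hv.2⟩

lemma exists_leaf3 (hm : 3 ≤ m) (a b : Fin (m+1)) :
    ∃ v : Fin (m+1), v ≠ 0 ∧ v ≠ a ∧ v ≠ b := by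
  obtain ⟨v, hv⟩ := exists_not_mem_of_card_lt (s := {0, a, b})
    (lt_of_le_of_lt (le_trans (Finset.card_insert_le _ _)
      (by exact Nat.succ_le_succ (Finset.card_insert_le _ _))) (by simp; omega))
  simp only [Finset.mem_insert, Finset.mem_singleton, not_or] at hv
  exact ⟨v, hv.1, hv.2.1, hv.2.2⟩

lemma exists_not_done {done : Finset (Fin (m+1))} (h : done ≠ Finset.univ) :
    ∃ v, v ∉ done := by
  refine exists_not_mem_of_card_lt ?_
  rcases lt_or_eq_of_le (Finset.card_le_univ done) with h' | h'
  · simpa using h'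
  · exact absurd (Finset.eq_univ_of_card _ (by simpa using h')) h

lemma parity_flip (ε : Bool) (n : ℕ) :
    (ε != decide ((n+1) % 2 = 1)) = !(ε != decide (n % 2 = 1)) := by
  rcases Nat.mod_two_eq_zero_or_one n with h | h <;>
    · have h2 : (n+1) % 2 = (n % 2 + 1) % 2 := by omega
      cases ε <;> simp [h, h2]

end StarProof

namespace StarProof

/-! ### Colour tables for the even star with 4 colours -/

/-- allowed uniform round-start patterns `(centre, leaves, whose turn)` -/
def tabU : Fin 4 → Fin 4 → Bool → Bool
  | 0, 1, _ => true
  | 0, 2, _ => true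
  | 1, 0, _ => true
  | 1, 2, _ => true
  | 2, 0, _ => true
  | 2, 1, _ => true
  | 3, 0, _ => true
  | 3, 1, true => true
  | _, _, _ => false

/-- allowed mixed round-start patterns `(centre, majority, special, whose turn)` -/
def tabM : Fin 4 → Fin 4 → Fin 4 → Bool → Bool
  | 0, 1, 2, true => true
  | 0, 2, 1, _ => true
  | 1, 0, 2, true => true
  | 2, 0, 1, true => true
  | 3, 0, 1, true => true
  | 3, 0, 2, true => true
  | 3, 1, 2, true => true
  | 1, 2, 0, false => true
  | 2, 1, 0, false => true
  | 3, 1, 0, false => true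
  | _, _, _, _ => false

/-- pure version of the greedy-leaf predicate when the leaf is coloured -/
def g2p {k : ℕ} (a δ x : Fin k) : Prop :=
  (x ≠ a ∧ x ≠ δ) ∧ ∀ y, y < x → y = a ∨ y = δ

instance {k : ℕ} (a δ x : Fin k) : Decidable (g2p a δ x) := by unfold g2p; infer_instance

def cminU {k : ℕ} (γ b c : Fin k) : Prop :=
  (c ≠ γ ∧ c ≠ b) ∧ ∀ y, y < c → y = γ ∨ y = b

instance {k : ℕ} (γ b c : Fin k) : Decidable (cminU γ b c) := by unfold cminU; infer_instance

def cminM {k : ℕ} (γ b d c : Fin k) : Prop :=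
  (c ≠ γ ∧ c ≠ b ∧ c ≠ d) ∧ ∀ y, y < c → y = γ ∨ y = b ∨ y = d

instance {k : ℕ} (γ b d c : Fin k) : Decidable (cminM γ b d c) := by unfold cminM; infer_instance

def cmin4 {k : ℕ} (γ b d x c : Fin k) : Prop :=
  (c ≠ γ ∧ c ≠ b ∧ c ≠ d ∧ c ≠ x) ∧ ∀ y, y < c → y = γ ∨ y = b ∨ y = d ∨ y = x

instance {k : ℕ} (γ b d x c : Fin k) : Decidable (cmin4 γ b d x c) := by
  unfold cmin4; infer_instance

lemma F1 : ∀ (t : Bool) (γ b : Fin 4), tabU γ b t = true →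
    ∃ c b', cminU γ b c ∧ g2p b c b' ∧ tabU c b' (!t) = true := by decide

lemma F2 : ∀ (t : Bool) (γ b d : Fin 4), tabM γ b d t = true →
    ∃ c b' d', cminM γ b d c ∧ g2p b c b' ∧ g2p d c d' ∧
      ((b' = d' ∧ tabU c b' (!t) = true) ∨ tabM c b' d' (!t) = true) := by decide

lemma F3 : ∀ γ b x : Fin 4, tabU γ b false = true → g2p b γ x →
    ∃ c b', cminM γ b x c ∧ g2p b c b' ∧
      ((b' = x ∧ tabU c b' true = true) ∨ tabM c b' x true = true) := by decide

lemma F4 : ∀ γ b d x : Fin 4, tabM γ b d false = true → g2p d γ x →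
    ∃ c b', cminM γ b x c ∧ g2p b c b' ∧
      ((b' = x ∧ tabU c b' true = true) ∨ tabM c b' x true = true) := by decide

set_option maxHeartbeats 1000000 in
set_option synthInstance.maxHeartbeats 1000000 in
set_option synthInstance.maxSize 2000 in
lemma F5 : ∀ γ b d x : Fin 4, tabM γ b d false = true → g2p b γ x →
    ∃ c b' e, cmin4 γ b d x c ∧ g2p b c b' ∧ g2p d c e ∧
      ((b' = x ∧ b' = e ∧ tabU c b' true = true) ∨
       (b' = x ∧ tabM c b' e true = true) ∨
       (b' = e ∧ tabM c b' x true = true)) := by decide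

lemma F7 : ∀ a δ : Fin 4, ∃ x : Fin 4, x ≠ a ∧ x ≠ δ := by decide

lemma F7three : ∀ a δ : Fin 3, ∃ x : Fin 3, x ≠ a ∧ x ≠ δ := by decide

lemma FU_ne : ∀ (t : Bool) (γ b : Fin 4), tabU γ b t = true → γ ≠ b := by decide

lemma FM_ne : ∀ (t : Bool) (γ b d : Fin 4), tabM γ b d t = true →
    γ ≠ b ∧ γ ≠ d ∧ b ≠ d := by decide

lemma Finit : tabU 0 1 false = true := rfl

/-! ### odd star (3 colours) -/

lemma O1 : ∀ γ b : Fin 3, γ ≠ b →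
    ∃ c b', cminU γ b c ∧ g2p b c b' ∧ c ≠ b' := by decide

end StarProof

namespace StarProof

variable {m k : ℕ}

lemma ne_univ_of_card_lt {s : Finset (Fin (m+1))} (h : s.card < m + 1) :
    s ≠ Finset.univ := by
  intro he
  rw [he, Finset.card_univ, Fintype.card_fin] at h
  omega

/-- round-1 invariant: `done` is the coloured set, the colouring is proper, and
the turn is determined by parity. -/
def R1 (col : Fin (m+1) → Option (Fin k)) (done : Finset (Fin (m+1))) (turn : Bool) : Prop :=
  (∀ v, v ∈ done ↔ col v ≠ none) ∧
  (∀ v, v ≠ 0 → ∀ a, col v = some a → col 0 ≠ some a) ∧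
  turn = decide (done.card % 2 = 0)

lemma roundOne (hme : m % 2 = 0) (ag : Bool)
    (hA : ∀ col : Fin (m+1) → Option (Fin k), (∀ v, col v ≠ none) →
      (∀ v, v ≠ 0 → ∀ a, col v = some a → col 0 ≠ some a) →
      BobWins (starGraph m) k ag col Finset.univ false) :
    ∀ (j : ℕ) col done turn, m + 1 - done.card ≤ j → R1 col done turn →
      BobWins (starGraph m) k ag col done turn := by
  intro j
  induction j with
  | zero =>
    intro col done turn hj hr
    have hcard : done.card ≤ m + 1 := by
      have := Finset.card_le_univ done
      simpa using this
    have hdu : done = Finset.univ :=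
      Finset.eq_univ_of_card _ (by rw [Fintype.card_fin]; omega)
    subst hdu
    have hturn : turn = false := by
      rw [hr.2.2, Finset.card_univ, Fintype.card_fin]
      simp only [decide_eq_false_iff_not]
      omega
    subst hturn
    exact hA col (fun v => (hr.1 v).mp (Finset.mem_univ v)) hr.2.1
  | succ j ih =>
    intro col done turn hj hr
    by_cases hdu : done = Finset.univ
    · subst hdu
      have hturn : turn = false := by
        rw [hr.2.2, Finset.card_univ, Fintype.card_fin]
        simp only [decide_eq_false_iff_not]
        omega
      subst hturn
      exact hA col (fun v => (hr.1 v).mp (Finset.mem_univ v)) hr.2.1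
    · have havail : availReset done = done := if_neg hdu
      -- a helper producing the new invariant after any legal move
      have hstep : ∀ v ∉ done, ∀ c : Fin k, LegalColour (starGraph m) col v c →
          R1 (Function.update col v (some c)) (insert v done) (!turn) := by
        intro v hv c hl
        refine ⟨?_, ?_, ?_⟩
        · intro u
          by_cases hu : u = v
          · subst hu; simp
          · simp only [Finset.mem_insert, Function.update_of_ne hu, hr.1 u, hu, false_or]
        · intro u hu0 a ha
          by_cases hv0 : v = 0
          · subst hv0
            rw [Function.update_of_ne hu0] at ha
            rw [Function.update_self]
            have h2 := (legal_centre.mp hl).2 u hu0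
            intro he
            exact h2 (by rw [ha, ← Option.some_injective _ he])
          · rw [Function.update_of_ne (Ne.symm hv0)]
            by_cases huv : u = v
            · subst huv
              rw [Function.update_self] at ha
              have h2 := (legal_leaf hv0).mp hl |>.2
              intro he
              rw [← (Option.some_injective _ ha : c = a)] at he
              exact h2 he
            · rw [Function.update_of_ne huv] at ha
              exact hr.2.1 u hu0 a ha
        · rw [Finset.card_insert_of_notMem hv, hr.2.2]
          rcases Nat.mod_two_eq_zero_or_one done.card with h | h <;>
            simp [h, Nat.add_mod, Nat.mod_two_eq_zero_or_one]
      have hcard : done.card < m + 1 := by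
        rcases lt_or_eq_of_le (Finset.card_le_univ done) with h' | h'
        · simpa using h'
        · exact absurd (Finset.eq_univ_of_card _ (by simpa using h')) hdu
      by_cases hpar : done.card % 2 = 0
      · -- Alice's turn
        have hturn : turn = true := by rw [hr.2.2]; simp [hpar]
        subst hturn
        apply BobWins.aliceMove
        rw [havail]
        intro v hv c hcond
        have hl : LegalColour (starGraph m) col v c := by
          cases ag
          · simpa using hcond
          · exact (by simpa using hcond : GreedyColour _ _ _ _).1
        have := hstep v hv c hl
        apply ih _ _ _ (by rw [Finset.card_insert_of_notMem hv]; omega) this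
      · -- Bob's turn
        have hturn : turn = false := by rw [hr.2.2]; simp [hpar]
        subst hturn
        by_cases hstuck : ∃ v ∉ done, ∀ c, ¬ LegalColour (starGraph m) col v c
        · exact BobWins.bobStuck _ _ (by rw [havail]; exact hstuck)
        · push_neg at hstuck
          obtain ⟨v, hv⟩ := exists_not_done hdu
          obtain ⟨c, hc⟩ := exists_greedy (hstuck v hv)
          refine BobWins.bobMove _ _ v c (by rw [havail]; exact hv) hc ?_
          rw [havail]
          have := hstep v hv c hc.1
          apply ih _ _ _ (by rw [Finset.card_insert_of_notMem hv]; omega) this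

lemma r1_init (k : ℕ) : R1 (fun _ => none : Fin (m+1) → Option (Fin k)) ∅ true := by
  refine ⟨by simp, by simp, by simp⟩

/-- endgame, one colour -/
lemma endgame1 (ag : Bool) (col : Fin (m+1) → Option (Fin 1)) (htot : ∀ v, col v ≠ none) :
    BobWins (starGraph m) 1 ag col Finset.univ false := by
  obtain ⟨γ, hγ⟩ := Option.ne_none_iff_exists'.mp (htot 0)
  apply BobWins.bobStuck
  refine ⟨0, by simp [availReset], ?_⟩
  intro c hl
  have : c = γ := Subsingleton.elim _ _
  exact hl.1 (by rw [hγ, this])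

lemma E2uniq : ∀ a c γ : Fin 2, a ≠ γ → c ≠ γ → a = c := by decide

/-- endgame, two colours -/
lemma endgame2 (hm : 4 ≤ m) (ag : Bool) (col : Fin (m+1) → Option (Fin 2))
    (htot : ∀ v, col v ≠ none)
    (hprop : ∀ v, v ≠ 0 → ∀ a, col v = some a → col 0 ≠ some a) :
    BobWins (starGraph m) 2 ag col Finset.univ false := by
  obtain ⟨γ, hγ⟩ := Option.ne_none_iff_exists'.mp (htot 0)
  obtain ⟨ℓ1, hℓ1⟩ := exists_leaf (by omega : 1 ≤ m)
  obtain ⟨a, ha⟩ := Option.ne_none_iff_exists'.mp (htot ℓ1)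
  have haγ : a ≠ γ := by
    intro he
    exact hprop ℓ1 hℓ1 a ha (by rw [hγ, he])
  apply BobWins.bobStuck
  refine ⟨0, by simp [availReset], ?_⟩
  intro c hl
  rw [legal_centre] at hl
  by_cases hc : c = γ
  · exact hl.1 (by rw [hγ, hc])
  · exact hl.2 ℓ1 hℓ1 (by rw [ha, E2uniq a c γ haγ hc])

lemma E3cover : ∀ γ b x c : Fin 3, b ≠ γ → x ≠ γ → x ≠ b → (c = γ ∨ c = b ∨ c = x) := by decide

lemma E3third : ∀ b γ : Fin 3, b ≠ γ → ∃ x, (x ≠ b ∧ x ≠ γ) ∧ ∀ y, y < x → y = b ∨ y = γ := by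
  decide

lemma E3uniq : ∀ b γ c x : Fin 3, c ≠ b → c ≠ γ → x ≠ b → x ≠ γ → b ≠ γ → c = x := by decide

/-- endgame, three colours -/
lemma endgame3 (hm : 4 ≤ m) (ag : Bool) (col : Fin (m+1) → Option (Fin 3))
    (htot : ∀ v, col v ≠ none)
    (hprop : ∀ v, v ≠ 0 → ∀ a, col v = some a → col 0 ≠ some a) :
    BobWins (starGraph m) 3 ag col Finset.univ false := by
  obtain ⟨γ, hγ⟩ := Option.ne_none_iff_exists'.mp (htot 0)
  have hvals : ∀ v : Fin (m+1), v ≠ 0 → ∃ a, col v = some a ∧ a ≠ γ := by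
    intro v hv
    obtain ⟨a, ha⟩ := Option.ne_none_iff_exists'.mp (htot v)
    exact ⟨a, ha, fun he => hprop v hv a ha (by rw [hγ, he])⟩
  by_cases hU : ∀ u w : Fin (m+1), u ≠ 0 → w ≠ 0 → col u = col w
  · -- all leaves share a colour b
    obtain ⟨ℓ1, hℓ1⟩ := exists_leaf (by omega : 1 ≤ m)
    obtain ⟨b, hb, hbγ⟩ := hvals ℓ1 hℓ1
    have hall : ∀ v : Fin (m+1), v ≠ 0 → col v = some b := by
      intro v hv; rw [hU v ℓ1 hv hℓ1, hb]
    obtain ⟨x, hx, hxmin⟩ := E3third b γ hbγ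
    have hgreedy : GreedyColour (starGraph m) col ℓ1 x := by
      rw [greedy_leaf_iff hℓ1 hγ]
      refine ⟨⟨by rw [hb]; exact fun he => hx.1 (Option.some_injective _ he).symm, hx.2⟩, ?_⟩
      intro y hy
      rcases hxmin y hy with h | h
      · exact Or.inl (by rw [hb, h])
      · exact Or.inr h
    refine BobWins.bobMove _ _ ℓ1 x (by simp [availReset]) hgreedy ?_
    apply BobWins.aliceMove
    intro v hv c hcond
    set col1 := Function.update col ℓ1 (some x) with hcol1
    have hsing : ({ℓ1} : Finset (Fin (m+1))) ≠ Finset.univ :=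
      ne_univ_of_card_lt (by simp; omega)
    have hres : availReset (insert ℓ1 (availReset (Finset.univ : Finset (Fin (m+1))))) = {ℓ1} := by
      simp [availReset, hsing]
    rw [hres] at hv
    have hl : LegalColour (starGraph m) col1 v c := by
      cases ag
      · simpa using hcond
      · exact (by simpa using hcond : GreedyColour _ _ _ _).1
    have hc10 : col1 0 = some γ := by
      rw [hcol1, Function.update_of_ne (Ne.symm hℓ1), hγ]
    by_cases hv0 : v = 0
    · -- the centre is already stuck, Alice cannot legally colour it
      exfalso
      subst hv0
      rw [legal_centre] at hl
      obtain ⟨ℓ2, hℓ2, hℓ2ℓ1⟩ := exists_leaf2 (by omega) ℓ1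
      have h1 : c ≠ γ := fun he => hl.1 (by rw [hc10, he])
      have h2 : c ≠ x := fun he => hl.2 ℓ1 hℓ1 (by rw [hcol1, Function.update_self, he])
      have h3 : c ≠ b := fun he =>
        hl.2 ℓ2 hℓ2 (by rw [hcol1, Function.update_of_ne hℓ2ℓ1, hall ℓ2 hℓ2, he])
      rcases E3cover γ b x c hbγ hx.2 hx.1 with h | h | h
      exacts [h1 h, h3 h, h2 h]
    · -- Alice recolours a further leaf, necessarily to x; then the centre is stuck
      have hvℓ1 : v ≠ ℓ1 := by
        intro he; rw [he] at hv; exact hv (Finset.mem_singleton_self ℓ1)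
      rw [legal_leaf hv0] at hl
      have hcv : col1 v = some b := by
        rw [hcol1, Function.update_of_ne hvℓ1, hall v hv0]
      have h1 : c ≠ b := fun he => hl.1 (by rw [hcv, he])
      have h2 : c ≠ γ := fun he => hl.2 (by rw [hc10, he])
      have hcx : c = x := E3uniq b γ c x h1 h2 hx.1 hx.2 hbγ
      subst hcx
      -- now `x` has been replaced by `c` everywhere
      apply BobWins.bobStuck
      have hne : insert v ({ℓ1} : Finset (Fin (m+1))) ≠ Finset.univ := by
        apply ne_univ_of_card_lt
        calc (insert v ({ℓ1} : Finset (Fin (m+1)))).card ≤ 2 := by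
              apply le_trans (Finset.card_insert_le _ _); simp
          _ < m + 1 := by omega
      refine ⟨0, ?_, ?_⟩
      · rw [hres, availReset, if_neg hne]
        simp only [Finset.mem_insert, Finset.mem_singleton, not_or]
        exact ⟨fun h => hv0 h.symm, fun h => hℓ1 h.symm⟩
      · intro c' hl'
        rw [legal_centre] at hl'
        obtain ⟨ℓ3, hℓ3, hℓ3ℓ1, hℓ3v⟩ := exists_leaf3 (by omega) ℓ1 v
        set col2 := Function.update col1 v (some c) with hcol2
        have hc20 : col2 0 = some γ := by
          rw [hcol2, Function.update_of_ne (fun h => hv0 h.symm), hc10]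
        have hc2ℓ1 : col2 ℓ1 = some c := by
          rw [hcol2, Function.update_of_ne (fun h => hvℓ1 h.symm), hcol1,
            Function.update_self]
        have hc2ℓ3 : col2 ℓ3 = some b := by
          rw [hcol2, Function.update_of_ne hℓ3v, hcol1, Function.update_of_ne hℓ3ℓ1,
            hall ℓ3 hℓ3]
        rcases E3cover γ b c c' hbγ hx.2 hx.1 with h | h | h
        · exact hl'.1 (by rw [hc20, h])
        · exact hl'.2 ℓ3 hℓ3 (by rw [hc2ℓ3, h])
        · exact hl'.2 ℓ1 hℓ1 (by rw [hc2ℓ1, h])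
  · -- two leaves with different colours: the centre is stuck right away
    push_neg at hU
    obtain ⟨u, w, hu, hw, hne⟩ := hU
    obtain ⟨a, ha, haγ⟩ := hvals u hu
    obtain ⟨b, hb, hbγ⟩ := hvals w hw
    have hab : a ≠ b := by
      intro he; rw [he] at ha; rw [ha, hb] at hne; exact hne rfl
    apply BobWins.bobStuck
    refine ⟨0, by simp [availReset], ?_⟩
    intro c hl
    rw [legal_centre] at hl
    rcases E3cover γ a b c haγ hbγ (Ne.symm hab) with h | h | h
    · exact hl.1 (by rw [hγ, h])
    · exact hl.2 u hu (by rw [ha, h])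
    · exact hl.2 w hw (by rw [hb, h])

/-- Bob wins on the even star with at most 3 colours. -/
lemma evenBobWins (hm : 4 ≤ m) (hme : m % 2 = 0) (ag : Bool) (k : ℕ) (hk : k ≤ 3) :
    BobWins (starGraph m) k ag (fun _ => none) ∅ true := by
  interval_cases k
  · exact BobWins.aliceMove _ _ (fun v _ c => c.elim0)
  · exact roundOne hme ag (fun col htot hprop => endgame1 ag col htot) (m+1) _ _ _
      (by simp) (r1_init 1)
  · exact roundOne hme ag (fun col htot hprop => endgame2 hm ag col htot hprop) (m+1) _ _ _
      (by simp) (r1_init 2)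
  · exact roundOne hme ag (fun col htot hprop => endgame3 hm ag col htot hprop) (m+1) _ _ _
      (by simp) (r1_init 3)

end StarProof

namespace StarProof

variable {m k : ℕ}

lemma g2p_toG2 {a δ x : Fin k} (h : g2p a δ x) : G2 (some a) δ x := by
  refine ⟨⟨fun he => h.1.1 (Option.some_injective _ he).symm, h.1.2⟩, ?_⟩
  intro y hy
  rcases h.2 y hy with h' | h'
  · exact Or.inl (by rw [h'])
  · exact Or.inr h'

lemma availReset_empty : availReset (∅ : Finset (Fin (m+1))) = ∅ := by
  simp [availReset]

lemma availReset_univ : availReset (Finset.univ : Finset (Fin (m+1))) = ∅ := by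
  simp [availReset]

lemma boundary_mem {D : Finset (Fin (m+1))} (hb : insert 0 D = Finset.univ)
    {v : Fin (m+1)} (hv : v ≠ 0) : v ∈ D := by
  have : v ∈ insert 0 D := by rw [hb]; exact Finset.mem_univ v
  rcases Finset.mem_insert.mp this with h | h
  · exact absurd h hv
  · exact h

lemma boundary_card {D : Finset (Fin (m+1))} (hD : 0 ∉ D)
    (hb : insert 0 D = Finset.univ) : D.card = m := by
  have := congrArg Finset.card hb
  rw [Finset.card_insert_of_notMem hD, Finset.card_univ, Fintype.card_fin] at this
  omega

lemma seg_col_update {w : Fin (m+1) → Option (Fin k)} {f : Fin (m+1) → Fin k}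
    {D : Finset (Fin (m+1))} {ℓ : Fin (m+1)} (hℓ : ℓ ∉ D) :
    Function.update (fun v => if v ∈ D then some (f v) else w v) ℓ (some (f ℓ)) =
      fun v => if v ∈ insert ℓ D then some (f v) else w v := by
  funext v
  by_cases hv : v = ℓ
  · subst hv; simp
  · rw [Function.update_of_ne hv]
    by_cases hvD : v ∈ D <;> simp [hvD, hv]

/-- invariant for Alice's survival on the odd star with three colours -/
def InvO (col : Fin (m+1) → Option (Fin 3)) (done : Finset (Fin (m+1))) (turn : Bool) :
    Prop :=
  (col = (fun _ => none) ∧ done = ∅ ∧ turn = true) ∨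
  (∃ (δ : Fin 3) (w : Fin (m+1) → Option (Fin 3)) (f : Fin (m+1) → Fin 3)
      (D : Finset (Fin (m+1))) (ε : Bool) (b : Fin 3),
    0 ∉ D ∧ w 0 = some δ ∧ (∀ v, v ≠ 0 → v ∉ D → G2 (w v) δ (f v)) ∧
    δ ≠ b ∧ (∀ v, v ≠ 0 → f v = b) ∧ (ε != decide (m % 2 = 1)) = true ∧
    col = (fun v => if v ∈ D then some (f v) else w v) ∧
    done = insert 0 D ∧ turn = (ε != decide (D.card % 2 = 1)))

lemma oddKey (hm : 1 ≤ m) (hmo : m % 2 = 1) (ag : Bool) :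
    ∀ col done turn, BobWins (starGraph m) 3 ag col done turn →
      InvO col done turn → False := by
  intro col done turn hbw
  induction hbw with
  | bobStuck col done h =>
    rintro (⟨_, _, ht⟩ | ⟨δ, w, f, D, ε, b, hD, hw0, hG, hδb, hfb, hEnd, hcol, hdone, hturn⟩)
    · simp at ht
    · by_cases hb : insert 0 D = Finset.univ
      · rw [boundary_card hD hb] at hturn
        rw [hEnd] at hturn
        simp at hturn
      · obtain ⟨v, hv, hstuck⟩ := h
        rw [hdone, availReset, if_neg hb] at hv
        have hv0 : v ≠ 0 := fun he => hv (he ▸ Finset.mem_insert_self 0 D)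
        have hvD : v ∉ D := fun he => hv (Finset.mem_insert_of_mem he)
        have hg := hG v hv0 hvD
        apply hstuck (f v)
        rw [legal_leaf hv0]
        constructor
        · rw [hcol]; simp only [hvD, if_false]; exact hg.1.1
        · rw [hcol]; simp only [hD, if_false]
          rw [hw0]
          exact fun he => hg.1.2 (Option.some_injective _ he).symm
  | bobMove col done v c hv hc h ih =>
    rintro (⟨_, _, ht⟩ | ⟨δ, w, f, D, ε, b, hD, hw0, hG, hδb, hfb, hEnd, hcol, hdone, hturn⟩)
    · simp at ht
    · by_cases hb : insert 0 D = Finset.univ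
      · rw [boundary_card hD hb] at hturn
        rw [hEnd] at hturn
        simp at hturn
      · rw [hdone, availReset, if_neg hb] at hv h ih
        have hv0 : v ≠ 0 := fun he => hv (he ▸ Finset.mem_insert_self 0 D)
        have hvD : v ∉ D := fun he => hv (Finset.mem_insert_of_mem he)
        have hcol0 : col 0 = some δ := by rw [hcol]; simp only [hD, if_false]; exact hw0
        have hcolv : col v = w v := by rw [hcol]; simp only [hvD, if_false]
        have hg : G2 (w v) δ c := by
          rw [← hcolv]
          exact (greedy_leaf_iff hv0 hcol0).mp hc
        have hcf : c = f v := G2_unique hg (hG v hv0 hvD)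
        subst hcf
        apply ih
        refine Or.inr ⟨δ, w, f, insert v D, ε, b, ?_, hw0, ?_, hδb, hfb, hEnd, ?_, ?_, ?_⟩
        · simp only [Finset.mem_insert, not_or]
          exact ⟨fun he => hv0 he.symm, hD⟩
        · intro u hu0 huD
          exact hG u hu0 (fun hc' => huD (Finset.mem_insert_of_mem hc'))
        · rw [hcol]; exact seg_col_update hvD
        · ext u; simp only [Finset.mem_insert]; tauto
        · rw [Finset.card_insert_of_notMem hvD, parity_flip, ← hturn]; rfl
  | aliceMove col done h ih =>
    rintro (⟨hcol, hdone, -⟩ | ⟨δ, w, f, D, ε, b, hD, hw0, hG, hδb, hfb, hEnd, hcol, hdone, hturn⟩)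
    · -- initial position: Alice colours the centre with colour 0
      subst hcol hdone
      have hgreedy : GreedyColour (starGraph m) (fun _ => none) 0 (0 : Fin 3) :=
        ⟨⟨fun h => by simp at h, fun _ _ h => by simp at h⟩,
          fun c' hc' => absurd hc' (by simp [Fin.lt_def])⟩
      have hcond : (if ag then GreedyColour (starGraph m) (fun _ => none) 0 (0 : Fin 3)
          else LegalColour (starGraph m) (fun _ => none) 0 (0 : Fin 3)) := by
        cases ag
        · exact hgreedy.1
        · exact hgreedy
      apply ih 0 (by rw [availReset_empty]; exact Finset.notMem_empty 0) 0 hcond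
      rw [availReset_empty]
      refine Or.inr ⟨0, Function.update (fun _ => none) 0 (some 0), fun _ => 1, ∅, false, 1,
        Finset.notMem_empty 0, Function.update_self 0 _ _, ?_, by decide, fun _ _ => rfl,
        by simp [hmo], ?_, rfl, by simp⟩
      · intro u hu0 _
        rw [Function.update_of_ne hu0]
        exact (by decide : G2 (none : Option (Fin 3)) (0 : Fin 3) (1 : Fin 3))
      · funext u; simp
    · by_cases hb : insert 0 D = Finset.univ
      · -- round boundary: Alice recolours the centre greedily
        rw [hdone, hb] at h ih
        rw [availReset_univ] at h ih
        have hp : ∀ u : Fin (m+1), u ≠ 0 → col u = some (f u) := by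
          intro u hu0
          rw [hcol]; simp [boundary_mem hb hu0]
        have hcol0 : col 0 = some δ := by rw [hcol]; simp only [hD, if_false]; exact hw0
        obtain ⟨c, b', hcmin, hg2, hcb'⟩ := O1 δ b hδb
        have hgreedy : GreedyColour (starGraph m) col 0 c := by
          rw [greedy_centre_iff hcol0 hp]
          refine ⟨⟨hcmin.1.1, fun u hu0 => by rw [hfb u hu0]; exact Ne.symm hcmin.1.2⟩, ?_⟩
          intro y hy
          rcases hcmin.2 y hy with h' | h'
          · exact Or.inl h'
          · obtain ⟨ℓ, hℓ⟩ := exists_leaf hm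
            exact Or.inr ⟨ℓ, hℓ, by rw [hfb ℓ hℓ, h']⟩
        have hcond : (if ag then GreedyColour (starGraph m) col 0 c
            else LegalColour (starGraph m) col 0 c) := by
          cases ag
          · exact hgreedy.1
          · exact hgreedy
        apply ih 0 (Finset.notMem_empty 0) c hcond
        refine Or.inr ⟨c, Function.update col 0 (some c), fun _ => b', ∅, false, b',
          Finset.notMem_empty 0, Function.update_self 0 _ _, ?_, hcb', fun _ _ => rfl,
          by simp [hmo], ?_, rfl, by simp⟩
        · intro u hu0 _
          rw [Function.update_of_ne hu0, hp u hu0, hfb u hu0]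
          exact g2p_toG2 hg2
        · funext u; simp
      · -- interior: Alice greedily recolours any available leaf
        rw [hdone, availReset, if_neg hb] at h ih
        obtain ⟨v, hv⟩ := exists_not_done hb
        have hv0 : v ≠ 0 := fun he => hv (he ▸ Finset.mem_insert_self 0 D)
        have hvD : v ∉ D := fun he => hv (Finset.mem_insert_of_mem he)
        have hcol0 : col 0 = some δ := by rw [hcol]; simp only [hD, if_false]; exact hw0
        have hcolv : col v = w v := by rw [hcol]; simp only [hvD, if_false]
        have hgreedy : GreedyColour (starGraph m) col v (f v) := by
          rw [greedy_leaf_iff hv0 hcol0, hcolv]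
          exact hG v hv0 hvD
        have hcond : (if ag then GreedyColour (starGraph m) col v (f v)
            else LegalColour (starGraph m) col v (f v)) := by
          cases ag
          · exact hgreedy.1
          · exact hgreedy
        apply ih v hv (f v) hcond
        refine Or.inr ⟨δ, w, f, insert v D, ε, b, ?_, hw0, ?_, hδb, hfb, hEnd, ?_, ?_, ?_⟩
        · simp only [Finset.mem_insert, not_or]
          exact ⟨fun he => hv0 he.symm, hD⟩
        · intro u hu0 huD
          exact hG u hu0 (fun hc' => huD (Finset.mem_insert_of_mem hc'))
        · rw [hcol]; exact seg_col_update hvD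
        · ext u; simp only [Finset.mem_insert]; tauto
        · rw [Finset.card_insert_of_notMem hvD, parity_flip, ← hturn]; rfl

/-- Alice survives the odd star with three colours. -/
lemma oddSafe (hm : 1 ≤ m) (hmo : m % 2 = 1) (ag : Bool) :
    ¬ BobWins (starGraph m) 3 ag (fun _ => none) ∅ true := by
  intro hbw
  exact oddKey hm hmo ag _ _ _ hbw (Or.inl ⟨rfl, rfl, rfl⟩)

end StarProof

namespace StarProof

variable {m : ℕ}

lemma G2_some_iff {k : ℕ} {a δ x : Fin k} : G2 (some a) δ x ↔ g2p a δ x := by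
  constructor
  · intro h
    refine ⟨⟨fun he => h.1.1 (congrArg some he.symm), h.1.2⟩, ?_⟩
    intro y hy
    exact (h.2 y hy).imp (fun h' => (Option.some_injective _ h').symm) id
  · exact g2p_toG2

/-- round-start patterns for the even star -/
def GoodE (γ : Fin 4) (p : Fin (m+1) → Fin 4) (t : Bool) : Prop :=
  (∃ b, tabU γ b t = true ∧ ∀ v, v ≠ 0 → p v = b) ∨
  (∃ b d ℓ0, ℓ0 ≠ (0 : Fin (m+1)) ∧ tabM γ b d t = true ∧ p ℓ0 = d ∧
    ∀ v, v ≠ 0 → v ≠ ℓ0 → p v = b)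

/-- invariant for Alice's survival on the even star with four colours -/
def InvE (col : Fin (m+1) → Option (Fin 4)) (done : Finset (Fin (m+1))) (turn : Bool) :
    Prop :=
  (col = (fun _ => none) ∧ done = ∅ ∧ turn = true) ∨
  (∃ (δ : Fin 4) (w : Fin (m+1) → Option (Fin 4)) (f : Fin (m+1) → Fin 4)
      (D : Finset (Fin (m+1))) (ε : Bool),
    0 ∉ D ∧ w 0 = some δ ∧ (∀ v, v ≠ 0 → v ∉ D → G2 (w v) δ (f v)) ∧
    GoodE δ f ε ∧
    col = (fun v => if v ∈ D then some (f v) else w v) ∧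
    done = insert 0 D ∧ turn = (ε != decide (D.card % 2 = 1))) ∨
  (∃ (γ x : Fin 4) (p : Fin (m+1) → Fin 4) (ℓ1 : Fin (m+1)),
    ℓ1 ≠ 0 ∧ GoodE γ p false ∧ g2p (p ℓ1) γ x ∧
    col = (fun v => if v = ℓ1 then some x else if v = 0 then some γ else some (p v)) ∧
    done = {ℓ1} ∧ turn = true)

section EvenKey

variable (hm : 4 ≤ m) (hme : m % 2 = 0)
include hm hme

/-- at a round boundary, the greedy recolouring of the centre exists and keeps the
invariant -/
lemma boundaryCentre {col : Fin (m+1) → Option (Fin 4)} {δ : Fin 4}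
    {f : Fin (m+1) → Fin 4} {t : Bool}
    (hcol0 : col 0 = some δ) (hp : ∀ u, u ≠ 0 → col u = some (f u))
    (hGood : GoodE δ f t) :
    ∃ c₀, GreedyColour (starGraph m) col 0 c₀ ∧
      InvE (Function.update col 0 (some c₀)) (insert 0 ∅) (!t) := by
  rcases hGood with ⟨b, htab, hfb⟩ | ⟨b, d, ℓ0, hℓ0, htab, hpd, hfb⟩
  · -- uniform round-start
    obtain ⟨c₀, b', hcmin, hg2, htab'⟩ := F1 t δ b htab
    refine ⟨c₀, ?_, ?_⟩
    · rw [greedy_centre_iff hcol0 hp]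
      refine ⟨⟨hcmin.1.1, fun u hu0 => by rw [hfb u hu0]; exact Ne.symm hcmin.1.2⟩, ?_⟩
      intro y hy
      rcases hcmin.2 y hy with h' | h'
      · exact Or.inl h'
      · obtain ⟨ℓ, hℓ⟩ := exists_leaf (show 1 ≤ m by omega)
        exact Or.inr ⟨ℓ, hℓ, by rw [hfb ℓ hℓ, h']⟩
    · refine Or.inr (Or.inl ⟨c₀, Function.update col 0 (some c₀), fun _ => b', ∅, !t,
        Finset.notMem_empty 0, Function.update_self 0 _ _, ?_,
        Or.inl ⟨b', htab', fun _ _ => rfl⟩, ?_, rfl, by simp⟩)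
      · intro u hu0 _
        rw [Function.update_of_ne hu0, hp u hu0, hfb u hu0]
        exact g2p_toG2 hg2
      · funext u; simp
  · -- mixed round-start
    obtain ⟨c₀, b', d', hcmin, hg2b, hg2d, hres⟩ := F2 t δ b d htab
    refine ⟨c₀, ?_, ?_⟩
    · rw [greedy_centre_iff hcol0 hp]
      refine ⟨⟨hcmin.1.1, fun u hu0 => ?_⟩, ?_⟩
      · by_cases hu : u = ℓ0
        · rw [hu, hpd]; exact Ne.symm hcmin.1.2.2
        · rw [hfb u hu0 hu]; exact Ne.symm hcmin.1.2.1
      · intro y hy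
        rcases hcmin.2 y hy with h' | h' | h'
        · exact Or.inl h'
        · obtain ⟨ℓ, hℓ, hℓ0'⟩ := exists_leaf2 (show 2 ≤ m by omega) ℓ0
          exact Or.inr ⟨ℓ, hℓ, by rw [hfb ℓ hℓ hℓ0', h']⟩
        · exact Or.inr ⟨ℓ0, hℓ0, by rw [hpd, h']⟩
    · refine Or.inr (Or.inl ⟨c₀, Function.update col 0 (some c₀),
        fun v => if v = ℓ0 then d' else b', ∅, !t,
        Finset.notMem_empty 0, Function.update_self 0 _ _, ?_, ?_, ?_, rfl, by simp⟩)
      · intro u hu0 _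
        rw [Function.update_of_ne hu0, hp u hu0]
        by_cases hu : u = ℓ0
        · rw [hu, hpd]; simp only [if_pos rfl]; exact g2p_toG2 hg2d
        · rw [hfb u hu0 hu]; simp only [if_neg hu]; exact g2p_toG2 hg2b
      · rcases hres with ⟨heq, htab'⟩ | htab'
        · exact Or.inl ⟨b', htab', fun v hv => by by_cases h' : v = ℓ0 <;> simp [h', heq]⟩
        · exact Or.inr ⟨b', d', ℓ0, hℓ0, htab', by simp, fun v hv0 hv => by simp [hv]⟩
      · funext u; simp

lemma evenKey (ag : Bool) :
    ∀ col done turn, BobWins (starGraph m) 4 ag col done turn →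
      InvE col done turn → False := by
  intro col done turn hbw
  induction hbw with
  | bobStuck col done h =>
    rintro (⟨-, -, ht⟩ |
      ⟨δ, w, f, D, ε, hD, hw0, hG, hGood, hcol, hdone, hturn⟩ |
      ⟨γ, x, p, ℓ1, hℓ1, hGood, hg2, hcol, hdone, hturn⟩)
    · simp at ht
    · have hcol0 : col 0 = some δ := by rw [hcol]; simp only [hD, if_false]; exact hw0
      by_cases hb : insert 0 D = Finset.univ
      · -- boundary: no vertex is stuck
        have hDm : D.card = m := boundary_card hD hb
        have hε : ε = false := by
          rw [hDm] at hturn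
          have : decide (m % 2 = 1) = false := by simp; omega
          rw [this] at hturn
          simpa using hturn.symm
        subst hε
        have hp : ∀ u : Fin (m+1), u ≠ 0 → col u = some (f u) := by
          intro u hu0
          rw [hcol]; simp [boundary_mem hb hu0]
        obtain ⟨v, -, hstuck⟩ := h
        by_cases hv0 : v = 0
        · subst hv0
          rcases hGood with ⟨b, htab, hfb⟩ | ⟨b, d, ℓ0, hℓ0, htab, hpd, hfb⟩
          · obtain ⟨c₀, b', hcmin, -, -⟩ := F1 false δ b htab
            apply hstuck c₀
            rw [legal_centre]
            refine ⟨by rw [hcol0]; exact fun he => hcmin.1.1 (Option.some_injective _ he).symm,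
              fun u hu0 => ?_⟩
            rw [hp u hu0, hfb u hu0]
            exact fun he => hcmin.1.2 (Option.some_injective _ he).symm
          · obtain ⟨c₀, b', d', hcmin, -, -, -⟩ := F2 false δ b d htab
            apply hstuck c₀
            rw [legal_centre]
            refine ⟨by rw [hcol0]; exact fun he => hcmin.1.1 (Option.some_injective _ he).symm,
              fun u hu0 => ?_⟩
            rw [hp u hu0]
            by_cases hu : u = ℓ0
            · rw [hu, hpd]
              exact fun he => hcmin.1.2.2 (Option.some_injective _ he).symm
            · rw [hfb u hu0 hu]
              exact fun he => hcmin.1.2.1 (Option.some_injective _ he).symm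
        · obtain ⟨c₀, hc1, hc2⟩ := F7 (f v) δ
          apply hstuck c₀
          rw [legal_leaf hv0]
          refine ⟨by rw [hp v hv0]; exact fun he => hc1 (Option.some_injective _ he).symm,
            by rw [hcol0]; exact fun he => hc2 (Option.some_injective _ he).symm⟩
      · -- interior: every available leaf can be recoloured
        obtain ⟨v, hv, hstuck⟩ := h
        rw [hdone, availReset, if_neg hb] at hv
        have hv0 : v ≠ 0 := fun he => hv (he ▸ Finset.mem_insert_self 0 D)
        have hvD : v ∉ D := fun he => hv (Finset.mem_insert_of_mem he)
        have hg := hG v hv0 hvD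
        apply hstuck (f v)
        rw [legal_leaf hv0]
        constructor
        · rw [hcol]; simp only [hvD, if_false]; exact hg.1.1
        · rw [hcol0]
          exact fun he => hg.1.2 (Option.some_injective _ he).symm
    · simp at hturn
  | bobMove col done v c hv hc h ih =>
    rintro (⟨-, -, ht⟩ |
      ⟨δ, w, f, D, ε, hD, hw0, hG, hGood, hcol, hdone, hturn⟩ |
      ⟨γ, x, p, ℓ1, hℓ1, hGood, hg2, hcol, hdone, hturn⟩)
    · simp at ht
    · have hcol0 : col 0 = some δ := by rw [hcol]; simp only [hD, if_false]; exact hw0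
      by_cases hb : insert 0 D = Finset.univ
      · -- boundary, Bob opens the new round
        have hDm : D.card = m := boundary_card hD hb
        have hε : ε = false := by
          rw [hDm] at hturn
          have : decide (m % 2 = 1) = false := by simp; omega
          rw [this] at hturn
          simpa using hturn.symm
        subst hε
        have hp : ∀ u : Fin (m+1), u ≠ 0 → col u = some (f u) := by
          intro u hu0
          rw [hcol]; simp [boundary_mem hb hu0]
        rw [hdone, hb, availReset_univ] at h ih hv
        by_cases hv0 : v = 0
        · -- Bob recolours the centre
          subst hv0
          obtain ⟨c₀, hgreedy, hinv⟩ := boundaryCentre hm hme hcol0 hp hGood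
          have hcc : c = c₀ := greedy_unique hc hgreedy
          subst hcc
          exact ih hinv
        · -- Bob recolours a leaf: intermediate position
          have hgx : g2p (f v) δ c := by
            rw [← G2_some_iff, ← hp v hv0]
            exact (greedy_leaf_iff hv0 hcol0).mp hc
          apply ih
          refine Or.inr (Or.inr ⟨δ, c, f, v, hv0, ?_, hgx, ?_, by simp, rfl⟩)
          · -- `GoodE δ f false` : the boundary turn was `false`
            exact hGood
          · funext u
            by_cases hu : u = v
            · subst hu; simp
            · rw [Function.update_of_ne hu]
              by_cases hu0 : u = 0
              · subst hu0; simp [Ne.symm hv0, hcol0]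
              · simp [hu, hu0, hp u hu0]
      · -- interior: Bob greedily recolours an available leaf
        rw [hdone, availReset, if_neg hb] at hv h ih
        have hv0 : v ≠ 0 := fun he => hv (he ▸ Finset.mem_insert_self 0 D)
        have hvD : v ∉ D := fun he => hv (Finset.mem_insert_of_mem he)
        have hcolv : col v = w v := by rw [hcol]; simp only [hvD, if_false]
        have hg : G2 (w v) δ c := by
          rw [← hcolv]
          exact (greedy_leaf_iff hv0 hcol0).mp hc
        have hcf : c = f v := G2_unique hg (hG v hv0 hvD)
        subst hcf
        apply ih
        refine Or.inr (Or.inl ⟨δ, w, f, insert v D, ε, ?_, hw0, ?_, hGood, ?_, ?_, ?_⟩)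
        · simp only [Finset.mem_insert, not_or]
          exact ⟨fun he => hv0 he.symm, hD⟩
        · intro u hu0 huD
          exact hG u hu0 (fun hc' => huD (Finset.mem_insert_of_mem hc'))
        · rw [hcol]; exact seg_col_update hvD
        · ext u; simp only [Finset.mem_insert]; tauto
        · rw [Finset.card_insert_of_notMem hvD, parity_flip, ← hturn]; rfl
    · simp at hturn
  | aliceMove col done h ih =>
    rintro (⟨hcol, hdone, -⟩ |
      ⟨δ, w, f, D, ε, hD, hw0, hG, hGood, hcol, hdone, hturn⟩ |
      ⟨γ, x, p, ℓ1, hℓ1, hGood, hg2, hcol, hdone, hturn⟩)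
    · -- initial position: Alice colours the centre with colour 0
      subst hcol hdone
      have hgreedy : GreedyColour (starGraph m) (fun _ => none) 0 (0 : Fin 4) :=
        ⟨⟨fun h => by simp at h, fun _ _ h => by simp at h⟩,
          fun c' hc' => absurd hc' (by simp [Fin.lt_def])⟩
      have hcond : (if ag then GreedyColour (starGraph m) (fun _ => none) 0 (0 : Fin 4)
          else LegalColour (starGraph m) (fun _ => none) 0 (0 : Fin 4)) := by
        cases ag
        · exact hgreedy.1
        · exact hgreedy
      apply ih 0 (by rw [availReset_empty]; exact Finset.notMem_empty 0) 0 hcond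
      rw [availReset_empty]
      refine Or.inr (Or.inl ⟨0, Function.update (fun _ => none) 0 (some 0), fun _ => 1, ∅,
        false, Finset.notMem_empty 0, Function.update_self 0 _ _, ?_,
        Or.inl ⟨1, Finit, fun _ _ => rfl⟩, ?_, rfl, by simp⟩)
      · intro u hu0 _
        rw [Function.update_of_ne hu0]
        exact (by decide : G2 (none : Option (Fin 4)) (0 : Fin 4) (1 : Fin 4))
      · funext u; simp
    · have hcol0 : col 0 = some δ := by rw [hcol]; simp only [hD, if_false]; exact hw0
      by_cases hb : insert 0 D = Finset.univ
      · -- boundary, Alice opens the new round by recolouring the centre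
        have hDm : D.card = m := boundary_card hD hb
        have hε : ε = true := by
          rw [hDm] at hturn
          have : decide (m % 2 = 1) = false := by simp; omega
          rw [this] at hturn
          simpa using hturn.symm
        subst hε
        have hp : ∀ u : Fin (m+1), u ≠ 0 → col u = some (f u) := by
          intro u hu0
          rw [hcol]; simp [boundary_mem hb hu0]
        rw [hdone, hb, availReset_univ] at h ih
        obtain ⟨c₀, hgreedy, hinv⟩ := boundaryCentre hm hme hcol0 hp hGood
        have hcond : (if ag then GreedyColour (starGraph m) col 0 c₀
            else LegalColour (starGraph m) col 0 c₀) := by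
          cases ag
          · exact hgreedy.1
          · exact hgreedy
        exact ih 0 (Finset.notMem_empty 0) c₀ hcond hinv
      · -- interior: Alice greedily recolours any available leaf
        rw [hdone, availReset, if_neg hb] at h ih
        obtain ⟨v, hv⟩ := exists_not_done hb
        have hv0 : v ≠ 0 := fun he => hv (he ▸ Finset.mem_insert_self 0 D)
        have hvD : v ∉ D := fun he => hv (Finset.mem_insert_of_mem he)
        have hcolv : col v = w v := by rw [hcol]; simp only [hvD, if_false]
        have hgreedy : GreedyColour (starGraph m) col v (f v) := by
          rw [greedy_leaf_iff hv0 hcol0, hcolv]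
          exact hG v hv0 hvD
        have hcond : (if ag then GreedyColour (starGraph m) col v (f v)
            else LegalColour (starGraph m) col v (f v)) := by
          cases ag
          · exact hgreedy.1
          · exact hgreedy
        apply ih v hv (f v) hcond
        refine Or.inr (Or.inl ⟨δ, w, f, insert v D, ε, ?_, hw0, ?_, hGood, ?_, ?_, ?_⟩)
        · simp only [Finset.mem_insert, not_or]
          exact ⟨fun he => hv0 he.symm, hD⟩
        · intro u hu0 huD
          exact hG u hu0 (fun hc' => huD (Finset.mem_insert_of_mem hc'))
        · rw [hcol]; exact seg_col_update hvD
        · ext u; simp only [Finset.mem_insert]; tauto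
        · rw [Finset.card_insert_of_notMem hvD, parity_flip, ← hturn]; rfl
    · -- intermediate position: Alice recolours the centre
      have h0ℓ1 : (0 : Fin (m+1)) ≠ ℓ1 := Ne.symm hℓ1
      have hcol0 : col 0 = some γ := by rw [hcol]; simp [h0ℓ1]
      have hpu : ∀ u : Fin (m+1), u ≠ 0 → col u = some (if u = ℓ1 then x else p u) := by
        intro u hu0
        rw [hcol]
        by_cases hu : u = ℓ1 <;> simp [hu, hu0]
      have hsing : ({ℓ1} : Finset (Fin (m+1))) ≠ Finset.univ :=
        ne_univ_of_card_lt (by simp; omega)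
      rw [hdone, availReset, if_neg hsing] at h ih
      have h0mem : (0 : Fin (m+1)) ∉ ({ℓ1} : Finset (Fin (m+1))) := by
        simp [h0ℓ1]
      -- find Alice's centre move according to the current pattern
      rcases hGood with ⟨b, htab, hfb⟩ | ⟨b, d, ℓ0, hℓ0, htab, hpd, hfb⟩
      · -- uniform pattern, Bob flipped one leaf
        have hgx : g2p b γ x := by rw [← hfb ℓ1 hℓ1]; exact hg2
        obtain ⟨c₀, b', hcmin, hg2b, hres⟩ := F3 γ b x htab hgx
        have hgreedy : GreedyColour (starGraph m) col 0 c₀ := by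
          rw [greedy_centre_iff hcol0 hpu]
          refine ⟨⟨hcmin.1.1, fun u hu0 => ?_⟩, ?_⟩
          · by_cases hu : u = ℓ1
            · simp only [hu, if_pos rfl]; exact Ne.symm hcmin.1.2.2
            · simp only [if_neg hu, hfb u hu0]; exact Ne.symm hcmin.1.2.1
          · intro y hy
            rcases hcmin.2 y hy with h' | h' | h'
            · exact Or.inl h'
            · obtain ⟨ℓ, hℓ, hℓℓ1⟩ := exists_leaf2 (show 2 ≤ m by omega) ℓ1
              exact Or.inr ⟨ℓ, hℓ, by simp [hℓℓ1, hfb ℓ hℓ, h']⟩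
            · exact Or.inr ⟨ℓ1, hℓ1, by simp [h']⟩
        have hcond : (if ag then GreedyColour (starGraph m) col 0 c₀
            else LegalColour (starGraph m) col 0 c₀) := by
          cases ag
          · exact hgreedy.1
          · exact hgreedy
        apply ih 0 h0mem c₀ hcond
        refine Or.inr (Or.inl ⟨c₀, Function.update col 0 (some c₀),
          fun v => if v = ℓ1 then x else b', {ℓ1}, true, h0mem,
          Function.update_self 0 _ _, ?_, ?_, ?_, rfl, by simp⟩)
        · intro u hu0 huD
          have huℓ1 : u ≠ ℓ1 := by simpa using huD
          rw [Function.update_of_ne hu0, hpu u hu0]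
          simp only [if_neg huℓ1, hfb u hu0]
          exact g2p_toG2 hg2b
        · rcases hres with ⟨heq, htab'⟩ | htab'
          · exact Or.inl ⟨b', htab', fun v hv => by by_cases h' : v = ℓ1 <;> simp [h', heq]⟩
          · exact Or.inr ⟨b', x, ℓ1, hℓ1, htab', by simp, fun v hv0 hv => by simp [hv]⟩
        · funext u
          by_cases hu : u = 0
          · subst hu; simp [Finset.mem_singleton, h0ℓ1]
          · rw [Function.update_of_ne hu]
            by_cases huℓ1 : u = ℓ1
            · subst huℓ1
              simp [hcol, Finset.mem_singleton]
            · simp [Finset.mem_singleton, huℓ1]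
      · -- mixed pattern
        by_cases hℓ1ℓ0 : ℓ1 = ℓ0
        · -- Bob flipped the special leaf
          have hgx : g2p d γ x := by rw [← hpd, ← hℓ1ℓ0]; exact hg2
          obtain ⟨c₀, b', hcmin, hg2b, hres⟩ := F4 γ b d x htab hgx
          have hgreedy : GreedyColour (starGraph m) col 0 c₀ := by
            rw [greedy_centre_iff hcol0 hpu]
            refine ⟨⟨hcmin.1.1, fun u hu0 => ?_⟩, ?_⟩
            · by_cases hu : u = ℓ1
              · simp only [hu, if_pos rfl]; exact Ne.symm hcmin.1.2.2
              · simp only [if_neg hu, hfb u hu0 (hℓ1ℓ0 ▸ hu)]; exact Ne.symm hcmin.1.2.1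
            · intro y hy
              rcases hcmin.2 y hy with h' | h' | h'
              · exact Or.inl h'
              · obtain ⟨ℓ, hℓ, hℓℓ1⟩ := exists_leaf2 (show 2 ≤ m by omega) ℓ1
                exact Or.inr ⟨ℓ, hℓ, by simp [hℓℓ1, hfb ℓ hℓ (hℓ1ℓ0 ▸ hℓℓ1), h']⟩
              · exact Or.inr ⟨ℓ1, hℓ1, by simp [h']⟩
          have hcond : (if ag then GreedyColour (starGraph m) col 0 c₀
              else LegalColour (starGraph m) col 0 c₀) := by
            cases ag
            · exact hgreedy.1
            · exact hgreedy
          apply ih 0 h0mem c₀ hcond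
          refine Or.inr (Or.inl ⟨c₀, Function.update col 0 (some c₀),
            fun v => if v = ℓ1 then x else b', {ℓ1}, true, h0mem,
            Function.update_self 0 _ _, ?_, ?_, ?_, rfl, by simp⟩)
          · intro u hu0 huD
            have huℓ1 : u ≠ ℓ1 := by simpa using huD
            rw [Function.update_of_ne hu0, hpu u hu0]
            simp only [if_neg huℓ1, hfb u hu0 (hℓ1ℓ0 ▸ huℓ1)]
            exact g2p_toG2 hg2b
          · rcases hres with ⟨heq, htab'⟩ | htab'
            · exact Or.inl ⟨b', htab', fun v hv => by by_cases h' : v = ℓ1 <;> simp [h', heq]⟩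
            · exact Or.inr ⟨b', x, ℓ1, hℓ1, htab', by simp, fun v hv0 hv => by simp [hv]⟩
          · funext u
            by_cases hu : u = 0
            · subst hu; simp [Finset.mem_singleton, h0ℓ1]
            · rw [Function.update_of_ne hu]
              by_cases huℓ1 : u = ℓ1
              · subst huℓ1
                simp [hcol, Finset.mem_singleton]
              · simp [Finset.mem_singleton, huℓ1]
        · -- Bob flipped a majority leaf
          have hgx : g2p b γ x := by rw [← hfb ℓ1 hℓ1 hℓ1ℓ0]; exact hg2
          obtain ⟨c₀, b', e, hcmin, hg2b, hg2d, hres⟩ := F5 γ b d x htab hgx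
          have hℓ0ℓ1 : ℓ0 ≠ ℓ1 := fun h' => hℓ1ℓ0 h'.symm
          have hgreedy : GreedyColour (starGraph m) col 0 c₀ := by
            rw [greedy_centre_iff hcol0 hpu]
            refine ⟨⟨hcmin.1.1, fun u hu0 => ?_⟩, ?_⟩
            · by_cases hu : u = ℓ1
              · simp only [hu, if_pos rfl]; exact Ne.symm hcmin.1.2.2.2
              · simp only [if_neg hu]
                by_cases hu' : u = ℓ0
                · rw [hu', hpd]; exact Ne.symm hcmin.1.2.2.1
                · rw [hfb u hu0 hu']; exact Ne.symm hcmin.1.2.1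
            · intro y hy
              rcases hcmin.2 y hy with h' | h' | h' | h'
              · exact Or.inl h'
              · obtain ⟨ℓ, hℓ, hℓℓ0, hℓℓ1⟩ := exists_leaf3 (show 3 ≤ m by omega) ℓ0 ℓ1
                exact Or.inr ⟨ℓ, hℓ, by simp [hℓℓ1, hfb ℓ hℓ hℓℓ0, h']⟩
              · exact Or.inr ⟨ℓ0, hℓ0, by simp [hℓ0ℓ1, hpd, h']⟩
              · exact Or.inr ⟨ℓ1, hℓ1, by simp [h']⟩
          have hcond : (if ag then GreedyColour (starGraph m) col 0 c₀
              else LegalColour (starGraph m) col 0 c₀) := by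
            cases ag
            · exact hgreedy.1
            · exact hgreedy
          apply ih 0 h0mem c₀ hcond
          refine Or.inr (Or.inl ⟨c₀, Function.update col 0 (some c₀),
            fun v => if v = ℓ1 then x else if v = ℓ0 then e else b', {ℓ1}, true, h0mem,
            Function.update_self 0 _ _, ?_, ?_, ?_, rfl, by simp⟩)
          · intro u hu0 huD
            have huℓ1 : u ≠ ℓ1 := by simpa using huD
            rw [Function.update_of_ne hu0, hpu u hu0]
            simp only [if_neg huℓ1]
            by_cases hu' : u = ℓ0
            · subst hu'
              rw [hpd, if_pos rfl]
              exact g2p_toG2 hg2d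
            · rw [hfb u hu0 hu', if_neg hu']
              exact g2p_toG2 hg2b
          · rcases hres with ⟨hx', he', htab'⟩ | ⟨hx', htab'⟩ | ⟨he', htab'⟩
            · refine Or.inl ⟨b', htab', fun v hv => ?_⟩
              by_cases h1 : v = ℓ1
              · simp [h1, hx']
              · by_cases h2 : v = ℓ0 <;> simp [h1, h2, he', hℓ0ℓ1]
            · refine Or.inr ⟨b', e, ℓ0, hℓ0, htab', by simp [hℓ0ℓ1], fun v hv0 hv => ?_⟩
              by_cases h1 : v = ℓ1
              · simp [h1, hx']
              · simp [h1, hv]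
            · refine Or.inr ⟨b', x, ℓ1, hℓ1, htab', by simp, fun v hv0 hv => ?_⟩
              by_cases h2 : v = ℓ0
              · simp [hv, h2, he', hℓ0ℓ1]
              · simp [hv, h2]
          · funext u
            by_cases hu : u = 0
            · subst hu; simp [Finset.mem_singleton, h0ℓ1]
            · rw [Function.update_of_ne hu]
              by_cases huℓ1 : u = ℓ1
              · subst huℓ1
                simp [hcol, Finset.mem_singleton]
              · simp [Finset.mem_singleton, huℓ1]

end EvenKey

/-- Alice survives the even star with four colours. -/
lemma evenSafe (hm : 4 ≤ m) (hme : m % 2 = 0) (ag : Bool) :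
    ¬ BobWins (starGraph m) 4 ag (fun _ => none) ∅ true := by
  intro hbw
  exact evenKey hm hme ag _ _ _ hbw (Or.inl ⟨rfl, rfl, rfl⟩)

end StarProof

namespace StarProof

lemma star_adj (M : ℕ) (v w : Fin (M+1)) :
    (starGraph M).Adj v w ↔ v ≠ w ∧ (v = 0 ∨ w = 0) := Iff.rfl

lemma chi_le {V : Type*} [Fintype V] [DecidableEq V] (G : SimpleGraph V) (ag : Bool) {k : ℕ}
    (h : ¬ BobWins G k ag (fun _ => none) ∅ true) : eternalChiGreedy G ag ≤ k :=
  Nat.sInf_le h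

lemma evenChi_ge {m : ℕ} (hm : 4 ≤ m) (hme : m % 2 = 0) (ag : Bool) :
    4 ≤ eternalChiGreedy (starGraph m) ag := by
  have hne : {k : ℕ | ¬ BobWins (starGraph m) k ag (fun _ => none) ∅ true}.Nonempty :=
    ⟨4, evenSafe hm hme ag⟩
  have hmem := Nat.sInf_mem hne
  show 4 ≤ sInf {k : ℕ | ¬ BobWins (starGraph m) k ag (fun _ => none) ∅ true}
  by_contra h'
  push_neg at h'
  exact hmem (evenBobWins hm hme ag _ (by omega))

lemma star_lt (n : ℕ) (hn : 2 ≤ n) (ag : Bool) :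
    eternalChiGreedy (starGraph (2*n+1)) ag < eternalChiGreedy (starGraph (2*n)) ag := by
  have h1 : eternalChiGreedy (starGraph (2*n+1)) ag ≤ 3 :=
    chi_le _ _ (oddSafe (by omega) (by omega) ag)
  have h2 : 4 ≤ eternalChiGreedy (starGraph (2*n)) ag :=
    evenChi_ge (by omega) (by omega) ag
  omega

lemma star_embed (n : ℕ) :
    ∃ φ : Fin (2*n+1) ↪ Fin (2*n+2),
      ∀ a b, (starGraph (2*n)).Adj a b ↔ (starGraph (2*n+1)).Adj (φ a) (φ b) := by
  refine ⟨⟨Fin.castSucc, Fin.castSucc_injective _⟩, ?_⟩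
  intro a b
  simp only [Function.Embedding.coeFn_mk]
  rw [star_adj, star_adj (2*n+1) (Fin.castSucc a) (Fin.castSucc b)]
  constructor
  · rintro ⟨hne, h0⟩
    refine ⟨fun he => hne (Fin.castSucc_injective _ he), ?_⟩
    rcases h0 with h | h
    · exact Or.inl (by rw [h]; rfl)
    · exact Or.inr (by rw [h]; rfl)
  · rintro ⟨hne, h0⟩
    refine ⟨fun he => hne (by rw [he]), ?_⟩
    rcases h0 with h | h
    · exact Or.inl (by rwa [Fin.castSucc_eq_zero_iff] at h)
    · exact Or.inr (by rwa [Fin.castSucc_eq_zero_iff] at h)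

lemma part3 (n : ℕ) (hn : 2 ≤ n) :
    ∃ φ : Fin (2 * n + 1) ↪ Fin (2 * n + 2),
      (∀ a b, (starGraph (2 * n)).Adj a b ↔ (starGraph (2 * n + 1)).Adj (φ a) (φ b)) ∧
      eternalChiGreedy (starGraph (2 * n + 1)) false < eternalChiGreedy (starGraph (2 * n)) false ∧
      eternalChiGreedy (starGraph (2 * n + 1)) true < eternalChiGreedy (starGraph (2 * n)) true := by
  obtain ⟨φ, hφ⟩ := star_embed n
  exact ⟨φ, hφ, star_lt n hn false, star_lt n hn true⟩

end StarProof


/-- Neither `χ_g^{∞2}` nor `χ_g^{∞3}` is monotone under induced subgraphs: there are graphs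
`H ≤ G` (induced) with `χ_g^{∞2}(G) < χ_g^{∞2}(H)` and likewise for `χ_g^{∞3}`; the stars
`G = K_{1,2n+1}`, `H = K_{1,2n}` (`n ≥ 2`) witness both. -/
theorem stmt_16 :
    (∃ (m : ℕ) (G : SimpleGraph (Fin (m + 1))) (H : SimpleGraph (Fin m))
        (φ : Fin m ↪ Fin (m + 1)),
      (∀ a b, H.Adj a b ↔ G.Adj (φ a) (φ b)) ∧
      eternalChiGreedy G false < eternalChiGreedy H false) ∧
    (∃ (m : ℕ) (G : SimpleGraph (Fin (m + 1))) (H : SimpleGraph (Fin m))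
        (φ : Fin m ↪ Fin (m + 1)),
      (∀ a b, H.Adj a b ↔ G.Adj (φ a) (φ b)) ∧
      eternalChiGreedy G true < eternalChiGreedy H true) ∧
    ∀ n : ℕ, 2 ≤ n → ∃ φ : Fin (2 * n + 1) ↪ Fin (2 * n + 2),
      (∀ a b, (starGraph (2 * n)).Adj a b ↔ (starGraph (2 * n + 1)).Adj (φ a) (φ b)) ∧
      eternalChiGreedy (starGraph (2 * n + 1)) false < eternalChiGreedy (starGraph (2 * n)) false ∧
      eternalChiGreedy (starGraph (2 * n + 1)) true < eternalChiGreedy (starGraph (2 * n)) true := by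
  
  obtain ⟨φ, hφ, hlt1, hlt2⟩ := StarProof.part3 2 (le_refl 2)
  exact ⟨⟨5, starGraph 5, starGraph 4, φ, hφ, hlt1⟩,
    ⟨5, starGraph 5, starGraph 4, φ, hφ, hlt2⟩,
    fun n hn => StarProof.part3 n hn⟩
end
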